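/- arXiv:1711.05776 — 4 statements merged into one kernel-verified Lean document; each statement's English description precedes it below -/
import Mathlib

section
/- Let k be an algebraically closed field of characteristic different from 3 and let f be a nonzero binary quartic form over k. Then S(f) = 0 and T(f) = 0 if and only if f has a root of multiplicity at least 3, i.e. f = L³·M for some binary linear forms L, M over k with L ≠ 0. -/
open MvPolynomial

noncomputable section

/-- The classical invariant `S` of a binary quartic form with coefficients `f 0, …, f 4`. -/
def Sinv {R : Type*} [CommRing R] (f : Fin 5 → R) : R :=
  12 * f 0 * f 4 - 3 * f 1 * f 3 + f 2 ^ 2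

/-- The classical invariant `T` of a binary quartic form with coefficients `f 0, …, f 4`. -/
def Tinv {R : Type*} [CommRing R] (f : Fin 5 → R) : R :=
  72 * f 0 * f 2 * f 4 - 27 * f 0 * f 3 ^ 2 - 27 * f 1 ^ 2 * f 4
    + 9 * f 1 * f 2 * f 3 - 2 * f 2 ^ 3

/-- The binary quartic form `f₀ y⁴ + f₁ y³z + f₂ y²z² + f₃ yz³ + f₄ z⁴`. -/
def binQuartic {R : Type*} [CommRing R] (f : Fin 5 → R) : MvPolynomial (Fin 2) R :=
  ∑ i : Fin 5, C (f i) * X 0 ^ (4 - (i : ℕ)) * X 1 ^ (i : ℕ)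

/-- The `i`-th coefficient of a binary quartic form: coefficient of `y^(4-i) z^i`. -/
def binCoeff {R : Type*} [CommRing R] (g : MvPolynomial (Fin 2) R) (i : Fin 5) : R :=
  coeff (Finsupp.single 0 (4 - (i : ℕ)) + Finsupp.single 1 (i : ℕ)) g

/-- The substitution `g(y,z) = q(-v·y - w·z, u·y, u·z)`, a binary quartic form in `y, z` with
coefficients in `R[u,v,w]`. -/
def gsub {R : Type*} [CommRing R] (q : MvPolynomial (Fin 3) R) :
    MvPolynomial (Fin 2) (MvPolynomial (Fin 3) R) :=
  aeval
    (![(C (- X 1) * X 0 - C (X 2) * X 1 : MvPolynomial (Fin 2) (MvPolynomial (Fin 3) R)),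
       C (X 0) * X 0, C (X 0) * X 1]) q

/-- `u⁴ · H(q)`, the invariant `S` of `g(y,z) = q(-vy-wz, uy, uz)`; the harmonic quartic `H(q)`
is the form determined by `u⁴ · H(q) = SG q`. -/
def SG {R : Type*} [CommRing R] (q : MvPolynomial (Fin 3) R) : MvPolynomial (Fin 3) R :=
  Sinv (fun i => binCoeff (gsub q) i)

/-- `u⁶ · K(q)`, the invariant `T` of `g(y,z) = q(-vy-wz, uy, uz)`; the harmonic sextic `K(q)`
is the form determined by `u⁶ · K(q) = TG q`. -/
def TG {R : Type*} [CommRing R] (q : MvPolynomial (Fin 3) R) : MvPolynomial (Fin 3) R :=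
  Tinv (fun i => binCoeff (gsub q) i)

/-- dot product of two vectors in `R³`. -/
def dot3 {R : Type*} [CommRing R] (d a : Fin 3 → R) : R :=
  d 0 * a 0 + d 1 * a 1 + d 2 * a 2

/-- restriction of a ternary form to the parameterized line `(y,z) ↦ y·a + z·b`. -/
def restrictLine {R : Type*} [CommRing R] (q : MvPolynomial (Fin 3) R) (a b : Fin 3 → R) :
    MvPolynomial (Fin 2) R :=
  aeval (fun i => C (a i) * X 0 + C (b i) * X 1) q

/-- A binary quartic form vanishes identically or has a root of multiplicity at least `3`:
`f = L³·M` with `L ≠ 0` linear and `M` linear (possibly zero). -/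
def HasTripleRoot {R : Type*} [CommRing R] (f : MvPolynomial (Fin 2) R) : Prop :=
  ∃ L M : MvPolynomial (Fin 2) R,
    L.IsHomogeneous 1 ∧ M.IsHomogeneous 1 ∧ L ≠ 0 ∧ f = L ^ 3 * M

/-- The line with dual coordinates `d` is an inflection line of the quartic `{q = 0}`. -/
def IsInflectionLine {k : Type*} [Field k] (q : MvPolynomial (Fin 3) k) (d : Fin 3 → k) :
    Prop :=
  d ≠ 0 ∧ ∃ a b : Fin 3 → k, LinearIndependent k ![a, b] ∧
    dot3 d a = 0 ∧ dot3 d b = 0 ∧ HasTripleRoot (restrictLine q a b)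

/-- The line with dual coordinates `d` is a simple inflection line of `{q = 0}` with
inflection point `p`. -/
def IsSimpleInflectionLineAt {k : Type*} [Field k] (q : MvPolynomial (Fin 3) k)
    (d p : Fin 3 → k) : Prop :=
  d ≠ 0 ∧ ∃ (a b : Fin 3 → k) (s t : k), LinearIndependent k ![a, b] ∧
    dot3 d a = 0 ∧ dot3 d b = 0 ∧ (s, t) ≠ (0, 0) ∧
    (∀ i, p i = s * a i + t * b i) ∧
    eval p q = 0 ∧ (∃ i, eval p (pderiv i q) ≠ 0) ∧
    ∃ L M : MvPolynomial (Fin 2) k, L.IsHomogeneous 1 ∧ M.IsHomogeneous 1 ∧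
      LinearIndependent k ![L, M] ∧
      restrictLine q a b = L ^ 3 * M ∧ eval ![s, t] L = 0

/-- The line with dual coordinates `d` is a hyperinflection line of `{q = 0}` with
hyperinflection point `p`. -/
def IsHyperinflectionLineAt {k : Type*} [Field k] (q : MvPolynomial (Fin 3) k)
    (d p : Fin 3 → k) : Prop :=
  d ≠ 0 ∧ ∃ (a b : Fin 3 → k) (s t : k), LinearIndependent k ![a, b] ∧
    dot3 d a = 0 ∧ dot3 d b = 0 ∧ (s, t) ≠ (0, 0) ∧
    (∀ i, p i = s * a i + t * b i) ∧
    eval p q = 0 ∧ (∃ i, eval p (pderiv i q) ≠ 0) ∧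
    ∃ (c : k) (L : MvPolynomial (Fin 2) k), c ≠ 0 ∧ L.IsHomogeneous 1 ∧ L ≠ 0 ∧
      restrictLine q a b = C c * L ^ 4 ∧ eval ![s, t] L = 0

/-- The pairing `⟨·,·⟩` between quartic forms in `x,y,z` and quartic forms in `u,v,w`:
`⟨x^i y^j z^k, u^i v^j w^k⟩ = i!j!k!/2`. -/
def pairQ {R : Type*} [CommRing R] (q h : MvPolynomial (Fin 3) R) : R :=
  ∑ m ∈ q.support,
    (((m 0).factorial * (m 1).factorial * (m 2).factorial / 2 : ℕ) : R)
      * coeff m q * coeff m h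

/-- The action of `Σ c_{ξη} ξ ∂_η ∈ 𝔤𝔩₃(R)` on polynomials. -/
def lieAct {R : Type*} [CommRing R] (c : Fin 3 → Fin 3 → R)
    (q : MvPolynomial (Fin 3) R) : MvPolynomial (Fin 3) R :=
  ∑ ξ : Fin 3, ∑ η : Fin 3, C (c ξ η) * (X ξ * pderiv η q)

/-- substitution of variables by the linear change of coordinates `M`: `q(M·(x,y,z)ᵗ)`. -/
def substM {R : Type*} [CommRing R] (M : Matrix (Fin 3) (Fin 3) R)
    (q : MvPolynomial (Fin 3) R) : MvPolynomial (Fin 3) R :=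
  aeval (fun i => ∑ j : Fin 3, C (M i j) * X j) q

/-- The quartic form `q_ε = (x−y)⁴ + (x−z)⁴ + (y−εz)⁴ − (x⁴ + y⁴ + z⁴)`. -/
def qeps {k : Type*} [CommRing k] (ε : k) : MvPolynomial (Fin 3) k :=
  (X 0 - X 1) ^ 4 + (X 0 - X 2) ^ 4 + (X 1 - C ε * X 2) ^ 4
    - (X 0 ^ 4 + X 1 ^ 4 + X 2 ^ 4)

/-! ### Auxiliary machinery for `stmt0` -/

private def linF {R : Type*} [CommRing R] (a b : R) : MvPolynomial (Fin 2) R :=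
  C b * X 0 - C a * X 1

private def quadC {R : Type*} [CommRing R] (a1 b1 a2 b2 a3 b3 a4 b4 : R) : Fin 5 → R :=
  ![b1*b2*b3*b4,
    -(a1*b2*b3*b4 + b1*a2*b3*b4 + b1*b2*a3*b4 + b1*b2*b3*a4),
    a1*a2*b3*b4 + a1*b2*a3*b4 + a1*b2*b3*a4 + b1*a2*a3*b4 + b1*a2*b3*a4 + b1*b2*a3*a4,
    -(a1*a2*a3*b4 + a1*a2*b3*a4 + a1*b2*a3*a4 + b1*a2*a3*a4),
    a1*a2*a3*a4]

private lemma expandQuad {R : Type*} [CommRing R] (a1 b1 a2 b2 a3 b3 a4 b4 : R) :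
    binQuartic (quadC a1 b1 a2 b2 a3 b3 a4 b4)
      = linF a1 b1 * linF a2 b2 * linF a3 b3 * linF a4 b4 := by
  simp [binQuartic, quadC, linF, Fin.sum_univ_five,
    show ((3:Fin 5):ℕ) = 3 from rfl, show ((4:Fin 5):ℕ) = 4 from rfl, map_add, map_mul, map_neg]
  ring

private lemma monoEq {R : Type*} [CommRing R] (a : R) (p q : ℕ) :
    C a * (X 0 : MvPolynomial (Fin 2) R) ^ p * X 1 ^ q
      = monomial (Finsupp.single 0 p + Finsupp.single 1 q) a := by
  rw [X_pow_eq_monomial, X_pow_eq_monomial, C_apply, monomial_mul, monomial_mul]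
  simp

private lemma binCoeff_binQuartic {R : Type*} [CommRing R] (f : Fin 5 → R) (i : Fin 5) :
    binCoeff (binQuartic f) i = f i := by
  unfold binCoeff binQuartic
  simp only [monoEq]
  rw [coeff_sum]
  rw [Finset.sum_eq_single i]
  · simp [coeff_monomial]
  · intro j _ hj
    rw [coeff_monomial, if_neg]
    intro h
    apply hj
    have h1 := congrArg (fun s : Fin 2 →₀ ℕ => s 1) h
    simp [Finsupp.single_apply] at h1
    exact Fin.ext h1
  · intro h
    exact absurd (Finset.mem_univ i) h

private lemma binQuartic_inj {R : Type*} [CommRing R] {f g : Fin 5 → R}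
    (h : binQuartic f = binQuartic g) : f = g := by
  funext i
  rw [← binCoeff_binQuartic f i, h, binCoeff_binQuartic]

private lemma fin2_weight {m : Fin 2 →₀ ℕ} : (Finsupp.weight 1) m = m 0 + m 1 := by
  rw [show (Finsupp.weight 1 : (Fin 2 →₀ ℕ) →+ ℕ) = Finsupp.weight (fun _ => 1) from rfl,
    ← Finsupp.degree_eq_weight_one, Finsupp.degree_apply]
  rw [Finset.sum_subset (Finset.subset_univ m.support)]
  · exact Fin.sum_univ_two m
  · intro x _ hx
    exact Finsupp.notMem_support_iff.mp hx

private lemma homog1_eq {R : Type*} [CommRing R] (L : MvPolynomial (Fin 2) R)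
    (hL : L.IsHomogeneous 1) :
    L = C (coeff (Finsupp.single 0 1) L) * X 0 + C (coeff (Finsupp.single 1 1) L) * X 1 := by
  ext m
  rw [coeff_add, coeff_C_mul, coeff_C_mul, coeff_X', coeff_X']
  by_cases h0 : m = Finsupp.single 0 1
  · have h1 : m ≠ Finsupp.single 1 1 := by
      subst h0
      intro h
      have := congrArg (fun s : Fin 2 →₀ ℕ => s 0) h
      simp [Finsupp.single_apply] at this
    rw [if_pos h0.symm, if_neg (fun h => h1 h.symm)]
    subst h0; ring
  by_cases h1 : m = Finsupp.single 1 1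
  · rw [if_neg (fun h => h0 h.symm), if_pos h1.symm]
    subst h1; ring
  · rw [if_neg (fun h => h0 h.symm), if_neg (fun h => h1 h.symm)]
    ring_nf
    by_contra hc
    have hd := hL hc
    rw [fin2_weight] at hd
    have hm0 : m 0 = 1 ∧ m 1 = 0 ∨ m 0 = 0 ∧ m 1 = 1 := by omega
    rcases hm0 with ⟨ha, hb⟩ | ⟨ha, hb⟩
    · apply h0
      ext j
      fin_cases j <;> simp [ha, hb, Finsupp.single_apply]
    · apply h1
      ext j
      fin_cases j <;> simp [ha, hb, Finsupp.single_apply]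

private lemma linF_isHomog {R : Type*} [CommRing R] (a b : R) : (linF a b).IsHomogeneous 1 := by
  have h1 : ((C b : MvPolynomial (Fin 2) R) * X 0).IsHomogeneous 1 := by
    simpa using (isHomogeneous_C _ b).mul (isHomogeneous_X _ 0)
  have h2 : ((C a : MvPolynomial (Fin 2) R) * X 1).IsHomogeneous 1 := by
    simpa using (isHomogeneous_C _ a).mul (isHomogeneous_X _ 1)
  exact h1.sub h2

private lemma linF_ne_zero {k : Type*} [Field k] {a b : k} (h : ¬(a = 0 ∧ b = 0)) :
    linF a b ≠ 0 := by
  intro he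
  apply h
  constructor
  · have := congrArg (eval ![0, 1]) he
    simpa [linF] using this
  · have := congrArg (eval ![1, 0]) he
    simpa [linF] using this

set_option maxHeartbeats 1000000 in
private lemma discId {R : Type*} [CommRing R] (a1 b1 a2 b2 a3 b3 a4 b4 : R) :
    4 * (Sinv (quadC a1 b1 a2 b2 a3 b3 a4 b4))^3 - (Tinv (quadC a1 b1 a2 b2 a3 b3 a4 b4))^2
      = 27 * ((a1*b2-a2*b1)*(a1*b3-a3*b1)*(a1*b4-a4*b1)*(a2*b3-a3*b2)*(a2*b4-a4*b2)*(a3*b4-a4*b3))^2 := by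
  simp only [Sinv, Tinv, quadC, Matrix.cons_val_zero, Matrix.cons_val_one, Matrix.head_cons,
    Matrix.cons_val_two, Matrix.tail_cons, Matrix.cons_val_three, Matrix.cons_val_four]
  ring

set_option maxHeartbeats 1000000 in
private lemma SinvId {R : Type*} [CommRing R] (a1 b1 l a3 b3 a4 b4 : R) :
    Sinv (quadC a1 b1 (l*a1) (l*b1) a3 b3 a4 b4)
      = l^2 * ((a1*b3-a3*b1)*(a1*b4-a4*b1))^2 := by
  simp only [Sinv, quadC, Matrix.cons_val_zero, Matrix.cons_val_one, Matrix.head_cons,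
    Matrix.cons_val_two, Matrix.tail_cons, Matrix.cons_val_three, Matrix.cons_val_four]
  ring

private lemma STzero {R : Type*} [CommRing R] (a b c d : R) :
    Sinv (quadC a b a b a b c d) = 0 ∧ Tinv (quadC a b a b a b c d) = 0 := by
  constructor <;>
  · simp only [Sinv, Tinv, quadC, Matrix.cons_val_zero, Matrix.cons_val_one, Matrix.head_cons,
      Matrix.cons_val_two, Matrix.tail_cons, Matrix.cons_val_three, Matrix.cons_val_four]
    ring

private lemma propOf {k : Type*} [Field k] {a b a' b' : k} (h : ¬(a = 0 ∧ b = 0))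
    (h' : ¬(a' = 0 ∧ b' = 0)) (hd : a*b' - a'*b = 0) :
    ∃ μ : k, μ ≠ 0 ∧ a' = μ*a ∧ b' = μ*b := by
  by_cases ha : a = 0
  · have hb : b ≠ 0 := fun hb => h ⟨ha, hb⟩
    have ha' : a' = 0 := by
      have : a' * b = 0 := by rw [ha] at hd; linear_combination -hd
      rcases mul_eq_zero.mp this with h | h
      · exact h
      · exact absurd h hb
    have hb' : b' ≠ 0 := fun hb' => h' ⟨ha', hb'⟩
    exact ⟨b'/b, div_ne_zero hb' hb, by rw [ha, ha']; ring, by field_simp⟩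
  · have ha' : a' ≠ 0 := by
      intro ha'
      apply h'
      refine ⟨ha', ?_⟩
      rw [ha'] at hd
      have : a * b' = 0 := by linear_combination hd
      rcases mul_eq_zero.mp this with h | h
      · exact absurd h ha
      · exact h
    refine ⟨a'/a, div_ne_zero ha' ha, by field_simp, ?_⟩
    field_simp
    linear_combination hd

private lemma linF_smul {R : Type*} [CommRing R] (l a b : R) :
    linF (l*a) (l*b) = C l * linF a b := by
  simp only [linF, map_mul]
  ring

/-- Main helper: if `f` factors with the second linear factor proportional to the first and
`Sinv f = 0`, then `f` has a triple root. -/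
private lemma mainHelper {k : Type*} [Field k] (f : Fin 5 → k) (a1 b1 l a3 b3 a4 b4 : k)
    (h1 : ¬(a1 = 0 ∧ b1 = 0)) (h3 : ¬(a3 = 0 ∧ b3 = 0)) (h4 : ¬(a4 = 0 ∧ b4 = 0))
    (hl : l ≠ 0) (hfq : f = quadC a1 b1 (l*a1) (l*b1) a3 b3 a4 b4) (hS : Sinv f = 0) :
    ∃ L M : MvPolynomial (Fin 2) k, L.IsHomogeneous 1 ∧ M.IsHomogeneous 1 ∧
      L ≠ 0 ∧ binQuartic f = L ^ 3 * M := by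
  rw [hfq, SinvId] at hS
  have hdd : (a1*b3 - a3*b1) * (a1*b4 - a4*b1) = 0 := by
    rcases mul_eq_zero.mp hS with h | h
    · exact absurd (sq_eq_zero_iff.mp h) hl
    · exact sq_eq_zero_iff.mp h
  rcases mul_eq_zero.mp hdd with hd | hd
  · obtain ⟨μ, hμ, ha3, hb3⟩ := propOf h1 h3 hd
    refine ⟨linF a1 b1, C (l*μ) * linF a4 b4, linF_isHomog a1 b1, ?_, linF_ne_zero h1, ?_⟩
    · simpa using (isHomogeneous_C _ (l*μ)).mul (linF_isHomog a4 b4)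
    · rw [hfq, ha3, hb3, expandQuad, linF_smul, linF_smul, map_mul]
      ring
  · obtain ⟨μ, hμ, ha4, hb4⟩ := propOf h1 h4 hd
    refine ⟨linF a1 b1, C (l*μ) * linF a3 b3, linF_isHomog a1 b1, ?_, linF_ne_zero h1, ?_⟩
    · simpa using (isHomogeneous_C _ (l*μ)).mul (linF_isHomog a3 b3)
    · rw [hfq, ha4, hb4, expandQuad, linF_smul, linF_smul, map_mul]
      ring

private lemma root4 {k : Type*} [Field k] [IsAlgClosed k] (c4 c3 c2 c1 c0 : k) (h : c4 ≠ 0) :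
    ∃ r : k, c4*r^4 + c3*r^3 + c2*r^2 + c1*r + c0 = 0 := by
  have hd : (Polynomial.C c4 * Polynomial.X^4 + Polynomial.C c3 * Polynomial.X^3
      + Polynomial.C c2 * Polynomial.X^2 + Polynomial.C c1 * Polynomial.X
      + Polynomial.C c0 : Polynomial k).degree = 4 := by
    compute_degree!
  obtain ⟨r, hr⟩ := IsAlgClosed.exists_root _ (by rw [hd]; exact (by norm_num))
  exact ⟨r, by simpa [Polynomial.IsRoot] using hr⟩

private lemma root3 {k : Type*} [Field k] [IsAlgClosed k] (c3 c2 c1 c0 : k) (h : c3 ≠ 0) :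
    ∃ r : k, c3*r^3 + c2*r^2 + c1*r + c0 = 0 := by
  have hd : (Polynomial.C c3 * Polynomial.X^3
      + Polynomial.C c2 * Polynomial.X^2 + Polynomial.C c1 * Polynomial.X
      + Polynomial.C c0 : Polynomial k).degree = 3 := by
    compute_degree!
  obtain ⟨r, hr⟩ := IsAlgClosed.exists_root _ (by rw [hd]; exact (by norm_num))
  exact ⟨r, by simpa [Polynomial.IsRoot] using hr⟩

private lemma root2 {k : Type*} [Field k] [IsAlgClosed k] (c2 c1 c0 : k) (h : c2 ≠ 0) :
    ∃ r : k, c2*r^2 + c1*r + c0 = 0 := by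
  have hd : (Polynomial.C c2 * Polynomial.X^2 + Polynomial.C c1 * Polynomial.X
      + Polynomial.C c0 : Polynomial k).degree = 2 := by
    compute_degree!
  obtain ⟨r, hr⟩ := IsAlgClosed.exists_root _ (by rw [hd]; exact (by norm_num))
  exact ⟨r, by simpa [Polynomial.IsRoot] using hr⟩

private lemma step4 {k : Type*} [Field k] [IsAlgClosed k] (f0 f1 f2 f3 f4 : k) :
    ∃ a b g0 g1 g2 g3 : k, ¬(a = 0 ∧ b = 0) ∧
    f0 = b*g0 ∧ f1 = b*g1 - a*g0 ∧ f2 = b*g2 - a*g1 ∧ f3 = b*g3 - a*g2 ∧ f4 = -(a*g3) := by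
  by_cases h : f0 = 0
  · exact ⟨-1, 0, f1, f2, f3, f4, by simp, by simp [h], by ring, by ring, by ring, by ring⟩
  · obtain ⟨r, hr⟩ := root4 f0 f1 f2 f3 f4 h
    exact ⟨r, 1, f0, f1 + r*f0, f2 + r*(f1 + r*f0), f3 + r*(f2 + r*(f1 + r*f0)), by simp,
      by ring, by ring, by ring, by ring, by linear_combination hr⟩

private lemma step3 {k : Type*} [Field k] [IsAlgClosed k] (g0 g1 g2 g3 : k) :
    ∃ a b h0 h1 h2 : k, ¬(a = 0 ∧ b = 0) ∧
    g0 = b*h0 ∧ g1 = b*h1 - a*h0 ∧ g2 = b*h2 - a*h1 ∧ g3 = -(a*h2) := by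
  by_cases h : g0 = 0
  · exact ⟨-1, 0, g1, g2, g3, by simp, by simp [h], by ring, by ring, by ring⟩
  · obtain ⟨r, hr⟩ := root3 g0 g1 g2 g3 h
    exact ⟨r, 1, g0, g1 + r*g0, g2 + r*(g1 + r*g0), by simp,
      by ring, by ring, by ring, by linear_combination hr⟩

private lemma step2 {k : Type*} [Field k] [IsAlgClosed k] (h0 h1 h2 : k)
    (hne : ¬(h0 = 0 ∧ h1 = 0 ∧ h2 = 0)) :
    ∃ a b a' b' : k, ¬(a = 0 ∧ b = 0) ∧ ¬(a' = 0 ∧ b' = 0) ∧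
    h0 = b*b' ∧ h1 = -(a*b' + a'*b) ∧ h2 = a*a' := by
  by_cases h : h0 = 0
  · refine ⟨-1, 0, -h2, h1, by simp, ?_, by simp [h], by ring, by ring⟩
    rintro ⟨hh2, hh1⟩
    exact hne ⟨h, hh1, neg_eq_zero.mp hh2⟩
  · obtain ⟨r, hr⟩ := root2 h0 h1 h2 h
    exact ⟨r, 1, -h1 - r*h0, h0, by simp, by simp [h], by ring, by ring,
      by linear_combination hr⟩

/-- Every nonzero binary quartic splits into four nonzero linear factors (coefficient level). -/
private lemma splitQuartic {k : Type*} [Field k] [IsAlgClosed k] (f : Fin 5 → k)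
    (hf : ¬ ∀ i, f i = 0) :
    ∃ a1 b1 a2 b2 a3 b3 a4 b4 : k, ¬(a1 = 0 ∧ b1 = 0) ∧ ¬(a2 = 0 ∧ b2 = 0) ∧
      ¬(a3 = 0 ∧ b3 = 0) ∧ ¬(a4 = 0 ∧ b4 = 0) ∧ f = quadC a1 b1 a2 b2 a3 b3 a4 b4 := by
  obtain ⟨a1, b1, g0, g1, g2, g3, h1, e0, e1, e2, e3, e4⟩ := step4 (f 0) (f 1) (f 2) (f 3) (f 4)
  obtain ⟨a2, b2, t0, t1, t2, h2, u0, u1, u2, u3⟩ := step3 g0 g1 g2 g3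
  have hne : ¬(t0 = 0 ∧ t1 = 0 ∧ t2 = 0) := by
    rintro ⟨z0, z1, z2⟩
    apply hf
    have hg0 : g0 = 0 := by rw [u0, z0, mul_zero]
    have hg1 : g1 = 0 := by rw [u1, z0, z1]; ring
    have hg2 : g2 = 0 := by rw [u2, z1, z2]; ring
    have hg3 : g3 = 0 := by rw [u3, z2, mul_zero, neg_zero]
    have w0 : f 0 = 0 := by rw [e0, hg0, mul_zero]
    have w1 : f 1 = 0 := by rw [e1, hg0, hg1]; ring
    have w2 : f 2 = 0 := by rw [e2, hg1, hg2]; ring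
    have w3 : f 3 = 0 := by rw [e3, hg2, hg3]; ring
    have w4 : f 4 = 0 := by rw [e4, hg3, mul_zero, neg_zero]
    intro i
    fin_cases i <;> assumption
  obtain ⟨a3, b3, a4, b4, h3, h4, v0, v1, v2⟩ := step2 t0 t1 t2 hne
  refine ⟨a1, b1, a2, b2, a3, b3, a4, b4, h1, h2, h3, h4, ?_⟩
  have q0 : f 0 = quadC a1 b1 a2 b2 a3 b3 a4 b4 0 := by
    simp only [quadC, Matrix.cons_val_zero]; rw [e0, u0, v0]; ring
  have q1 : f 1 = quadC a1 b1 a2 b2 a3 b3 a4 b4 1 := by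
    simp only [quadC, Matrix.cons_val_one, Matrix.head_cons, Matrix.cons_val_zero]
    rw [e1, u0, u1, v0, v1]; ring
  have q2 : f 2 = quadC a1 b1 a2 b2 a3 b3 a4 b4 2 := by
    simp only [quadC, Matrix.cons_val_two, Matrix.tail_cons, Matrix.head_cons]
    rw [e2, u1, u2, v0, v1, v2]; ring
  have q3 : f 3 = quadC a1 b1 a2 b2 a3 b3 a4 b4 3 := by
    simp only [quadC, Matrix.cons_val_three, Matrix.tail_cons, Matrix.head_cons]
    rw [e3, u2, u3, v1, v2]; ring
  have q4 : f 4 = quadC a1 b1 a2 b2 a3 b3 a4 b4 4 := by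
    simp only [quadC, Matrix.cons_val_four, Matrix.tail_cons, Matrix.head_cons]
    rw [e4, u3, v2]; ring
  funext i
  fin_cases i <;> assumption


/-- Over an algebraically closed field of characteristic different from `3`,
a nonzero binary quartic form `f` satisfies `S(f) = 0` and `T(f) = 0` if and only if
`f = L³·M` for some linear forms `L ≠ 0` and `M`, i.e. `f` has a root of
multiplicity at least `3`. -/
theorem stmt0 {k : Type*} [Field k] [IsAlgClosed k] (h3 : (3 : k) ≠ 0)
    (f : Fin 5 → k) (hf : binQuartic f ≠ 0) :
    (Sinv f = 0 ∧ Tinv f = 0) ↔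
      ∃ L M : MvPolynomial (Fin 2) k, L.IsHomogeneous 1 ∧ M.IsHomogeneous 1 ∧
        L ≠ 0 ∧ binQuartic f = L ^ 3 * M := by
  constructor
  · rintro ⟨hS, hT⟩
    have hfz : ¬ ∀ i, f i = 0 := by
      intro h
      apply hf
      simp only [binQuartic]
      apply Finset.sum_eq_zero
      intro i _
      rw [h i, map_zero, zero_mul, zero_mul]
    obtain ⟨a1, b1, a2, b2, a3, b3, a4, b4, n1, n2, n3, n4, hfq⟩ := splitQuartic f hfz
    have hD : (a1*b2-a2*b1)*(a1*b3-a3*b1)*(a1*b4-a4*b1)*(a2*b3-a3*b2)*(a2*b4-a4*b2)*(a3*b4-a4*b3)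
        = 0 := by
      have h27 : (27:k) ≠ 0 := by
        have h33 : (27:k) = 3^3 := by norm_num
        rw [h33]; exact pow_ne_zero _ h3
      have hid := discId a1 b1 a2 b2 a3 b3 a4 b4
      rw [← hfq, hS, hT] at hid
      have hz : (27:k) * ((a1*b2-a2*b1)*(a1*b3-a3*b1)*(a1*b4-a4*b1)*(a2*b3-a3*b2)*(a2*b4-a4*b2)*(a3*b4-a4*b3))^2 = 0 := by
        linear_combination -hid
      rcases mul_eq_zero.mp hz with h | h
      · exact absurd h h27
      · exact sq_eq_zero_iff.mp h
    rcases mul_eq_zero.mp hD with hD5 | hd34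
    · rcases mul_eq_zero.mp hD5 with hD4 | hd24
      · rcases mul_eq_zero.mp hD4 with hD3 | hd23
        · rcases mul_eq_zero.mp hD3 with hD2 | hd14
          · rcases mul_eq_zero.mp hD2 with hd12 | hd13
            · -- pair (1,2)
              obtain ⟨μ, hμ, ha, hb⟩ := propOf n1 n2 hd12
              rw [ha, hb] at hfq
              exact mainHelper f a1 b1 μ a3 b3 a4 b4 n1 n3 n4 hμ hfq hS
            · -- pair (1,3)
              obtain ⟨μ, hμ, ha, hb⟩ := propOf n1 n3 hd13
              rw [ha, hb] at hfq
              have hfq' : f = quadC a1 b1 (μ*a1) (μ*b1) a2 b2 a4 b4 := by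
                rw [hfq]
                exact binQuartic_inj (by rw [expandQuad, expandQuad]; ring)
              exact mainHelper f a1 b1 μ a2 b2 a4 b4 n1 n2 n4 hμ hfq' hS
          · -- pair (1,4)
            obtain ⟨μ, hμ, ha, hb⟩ := propOf n1 n4 hd14
            rw [ha, hb] at hfq
            have hfq' : f = quadC a1 b1 (μ*a1) (μ*b1) a2 b2 a3 b3 := by
              rw [hfq]
              exact binQuartic_inj (by rw [expandQuad, expandQuad]; ring)
            exact mainHelper f a1 b1 μ a2 b2 a3 b3 n1 n2 n3 hμ hfq' hS
        · -- pair (2,3)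
          obtain ⟨μ, hμ, ha, hb⟩ := propOf n2 n3 hd23
          rw [ha, hb] at hfq
          have hfq' : f = quadC a2 b2 (μ*a2) (μ*b2) a1 b1 a4 b4 := by
            rw [hfq]
            exact binQuartic_inj (by rw [expandQuad, expandQuad]; ring)
          exact mainHelper f a2 b2 μ a1 b1 a4 b4 n2 n1 n4 hμ hfq' hS
      · -- pair (2,4)
        obtain ⟨μ, hμ, ha, hb⟩ := propOf n2 n4 hd24
        rw [ha, hb] at hfq
        have hfq' : f = quadC a2 b2 (μ*a2) (μ*b2) a1 b1 a3 b3 := by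
          rw [hfq]
          exact binQuartic_inj (by rw [expandQuad, expandQuad]; ring)
        exact mainHelper f a2 b2 μ a1 b1 a3 b3 n2 n1 n3 hμ hfq' hS
    · -- pair (3,4)
      obtain ⟨μ, hμ, ha, hb⟩ := propOf n3 n4 hd34
      rw [ha, hb] at hfq
      have hfq' : f = quadC a3 b3 (μ*a3) (μ*b3) a1 b1 a2 b2 := by
        rw [hfq]
        exact binQuartic_inj (by rw [expandQuad, expandQuad]; ring)
      exact mainHelper f a3 b3 μ a1 b1 a2 b2 n3 n1 n2 hμ hfq' hS
  · rintro ⟨L, M, hL, hM, hL0, hfe⟩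
    obtain ⟨α, β, hLr⟩ : ∃ α β, L = C α * X 0 + C β * X 1 := ⟨_, _, homog1_eq L hL⟩
    obtain ⟨γ, δ, hMr⟩ : ∃ γ δ, M = C γ * X 0 + C δ * X 1 := ⟨_, _, homog1_eq M hM⟩
    have key : binQuartic f = binQuartic (quadC (-β) α (-β) α (-β) α (-δ) γ) := by
      rw [hfe, hLr, hMr, expandQuad]
      simp only [linF, map_neg]
      ring
    rw [binQuartic_inj key]
    exact STzero _ _ _ _
end
end

section
/- Let k be an algebraically closed field (of any characteristic) and let f be a nonzero binary quartic form over k with S(f) = 0. If f is divisible by the square of a nonzero linear form, then f is divisible by the cube of a nonzero linear form. Equivalently, a nonzero binary quartic form with vanishing invariant S either has four distinct roots in P¹(k) or has a root of multiplicity at least 3. -/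
open MvPolynomial

noncomputable section

section stmt1aux

variable {k : Type*} [Field k]

lemma fin2_eq' (m : Fin 2 →₀ ℕ) : m = Finsupp.single 0 (m 0) + Finsupp.single 1 (m 1) := by
  ext i; fin_cases i <;> simp

lemma fin2_degree' (m : Fin 2 →₀ ℕ) : m.degree = m 0 + m 1 := by
  rw [Finsupp.degree_apply, Finset.sum_subset (Finset.subset_univ _)
    (by intro i _ h; exact Finsupp.notMem_support_iff.mp h)]
  simp [Fin.sum_univ_two]

lemma hom1_dec' (L : MvPolynomial (Fin 2) k) (h : L.IsHomogeneous 1) :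
    L = C (coeff (Finsupp.single 0 1) L) * X 0 + C (coeff (Finsupp.single 1 1) L) * X 1 := by
  ext m
  simp only [coeff_add, coeff_C_mul, coeff_X']
  by_cases hd : m.degree = 1
  · rw [fin2_degree'] at hd
    rcases Nat.eq_zero_or_pos (m 0) with h0 | h0
    · have h1 : m 1 = 1 := by omega
      have : m = Finsupp.single 1 1 := by rw [fin2_eq' m, h0, h1]; simp
      subst this
      simp [Finsupp.single_eq_single_iff]
    · have h0' : m 0 = 1 := by omega
      have h1 : m 1 = 0 := by omega
      have : m = Finsupp.single 0 1 := by rw [fin2_eq' m, h0', h1]; simp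
      subst this
      simp [Finsupp.single_eq_single_iff]
  · rw [h.coeff_eq_zero hd]
    have h1 : m ≠ Finsupp.single 0 1 := by rintro rfl; simp [fin2_degree'] at hd
    have h2 : m ≠ Finsupp.single 1 1 := by rintro rfl; simp [fin2_degree'] at hd
    simp [Ne.symm h1, Ne.symm h2]

lemma binQuartic_monomial' (f : Fin 5 → k) :
    binQuartic f = ∑ j : Fin 5,
      monomial (Finsupp.single 0 (4 - (j:ℕ)) + Finsupp.single 1 (j:ℕ)) (f j) := by
  unfold binQuartic
  refine Finset.sum_congr rfl fun j _ => ?_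
  rw [C_mul_X_pow_eq_monomial, X_pow_eq_monomial, monomial_mul, mul_one]

lemma coeff_binQuartic' (f : Fin 5 → k) (i : Fin 5) :
    coeff (Finsupp.single 0 (4 - (i:ℕ)) + Finsupp.single 1 (i:ℕ)) (binQuartic f) = f i := by
  rw [binQuartic_monomial']
  fin_cases i <;>
  · simp only [coeff_sum, coeff_monomial, Fin.sum_univ_five]
    norm_num [Finsupp.ext_iff, Finsupp.add_apply, Finsupp.single_apply, Fin.forall_fin_two,
      show ((3:Fin 5):ℕ)=3 from rfl, show ((4:Fin 5):ℕ)=4 from rfl]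
    try rfl

lemma Lsq' (p q : k) :
    (C p * X 0 + C q * X 1 : MvPolynomial (Fin 2) k)^2 =
      monomial (Finsupp.single 0 2) (p^2)
      + monomial (Finsupp.single 0 1 + Finsupp.single 1 1) (2*p*q)
      + monomial (Finsupp.single 1 2) (q^2) := by
  have e0 : (C p * X 0 : MvPolynomial (Fin 2) k) = monomial (Finsupp.single 0 1) p := by
    simpa using C_mul_X_pow_eq_monomial (a := p) (s := (0 : Fin 2)) (n := 1)
  have e1 : (C q * X 1 : MvPolynomial (Fin 2) k) = monomial (Finsupp.single 1 1) q := by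
    simpa using C_mul_X_pow_eq_monomial (a := q) (s := (1 : Fin 2)) (n := 1)
  rw [add_sq, e0, e1, pow_two, pow_two, monomial_mul, monomial_mul,
    show (2 : MvPolynomial (Fin 2) k) = C 2 from (map_ofNat C 2).symm, C_apply, mul_assoc,
    monomial_mul, monomial_mul, zero_add]
  simp only [← Finsupp.single_add]
  norm_num [pow_two, mul_assoc]

lemma coeff_Lsq_mul' (p q : k) (Q : MvPolynomial (Fin 2) k) (m : Fin 2 →₀ ℕ) :
    coeff m ((C p * X 0 + C q * X 1 : MvPolynomial (Fin 2) k)^2 * Q) =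
      (if Finsupp.single 0 2 ≤ m then p^2 * coeff (m - Finsupp.single 0 2) Q else 0)
      + (if Finsupp.single 0 1 + Finsupp.single 1 1 ≤ m then
          2*p*q * coeff (m - (Finsupp.single 0 1 + Finsupp.single 1 1)) Q else 0)
      + (if Finsupp.single 1 2 ≤ m then q^2 * coeff (m - Finsupp.single 1 2) Q else 0) := by
  rw [Lsq', add_mul, add_mul, coeff_add, coeff_add, coeff_monomial_mul', coeff_monomial_mul',
    coeff_monomial_mul']

lemma cube_mul' (p q α β : k) :
    (C p * X 0 + C q * X 1 : MvPolynomial (Fin 2) k)^3 * (C α * X 0 + C β * X 1)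
    = binQuartic ![p^3*α, p^3*β + 3*p^2*q*α, 3*p^2*q*β + 3*p*q^2*α,
        3*p*q^2*β + q^3*α, q^3*β] := by
  simp only [binQuartic, Fin.sum_univ_five, map_mul, map_pow, map_add, map_ofNat,
    Matrix.cons_val_zero, Matrix.cons_val_one, Matrix.head_cons, Matrix.cons_val_two,
    Matrix.tail_cons, Matrix.cons_val_three, Matrix.cons_val_four,
    show ((0:Fin 5):ℕ)=0 from rfl, show ((1:Fin 5):ℕ)=1 from rfl,
    show ((2:Fin 5):ℕ)=2 from rfl,
    show ((3:Fin 5):ℕ)=3 from rfl, show ((4:Fin 5):ℕ)=4 from rfl]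
  ring

lemma cb0' (f : Fin 5 → k) : coeff (Finsupp.single 0 4 : Fin 2 →₀ ℕ) (binQuartic f) = f 0 := by
  simpa using coeff_binQuartic' f 0
lemma cb1' (f : Fin 5 → k) :
    coeff (Finsupp.single 0 3 + Finsupp.single 1 1 : Fin 2 →₀ ℕ) (binQuartic f) = f 1 := by
  simpa using coeff_binQuartic' f 1
lemma cb2' (f : Fin 5 → k) :
    coeff (Finsupp.single 0 2 + Finsupp.single 1 2 : Fin 2 →₀ ℕ) (binQuartic f) = f 2 := by
  simpa using coeff_binQuartic' f 2
lemma cb3' (f : Fin 5 → k) :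
    coeff (Finsupp.single 0 1 + Finsupp.single 1 3 : Fin 2 →₀ ℕ) (binQuartic f) = f 3 := by
  simpa [show ((3:Fin 5):ℕ)=3 from rfl] using coeff_binQuartic' f 3
lemma cb4' (f : Fin 5 → k) : coeff (Finsupp.single 1 4 : Fin 2 →₀ ℕ) (binQuartic f) = f 4 := by
  simpa [show ((4:Fin 5):ℕ)=4 from rfl] using coeff_binQuartic' f 4

section extract
variable (p q : k) (Q : MvPolynomial (Fin 2) k)

local notation "lhs" m => coeff m ((C p * X 0 + C q * X 1 : MvPolynomial (Fin 2) k)^2 * Q)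

lemma e40' : (lhs (Finsupp.single 0 4 : Fin 2 →₀ ℕ)) = p^2 * coeff (Finsupp.single 0 2) Q := by
  rw [coeff_Lsq_mul',
    if_pos (by simp only [Finsupp.le_def, Finsupp.add_apply, Finsupp.single_apply]; decide),
    if_neg (by simp only [Finsupp.le_def, Finsupp.add_apply, Finsupp.single_apply]; decide),
    if_neg (by simp only [Finsupp.le_def, Finsupp.add_apply, Finsupp.single_apply]; decide),
    show (Finsupp.single 0 4 : Fin 2 →₀ ℕ) - Finsupp.single 0 2 = Finsupp.single 0 2 from by
      ext i; fin_cases i <;>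
        (simp only [Finsupp.tsub_apply, Finsupp.add_apply, Finsupp.single_apply]; decide)]
  ring

lemma e31' : (lhs (Finsupp.single 0 3 + Finsupp.single 1 1 : Fin 2 →₀ ℕ)) =
    p^2 * coeff (Finsupp.single 0 1 + Finsupp.single 1 1) Q
    + 2*p*q * coeff (Finsupp.single 0 2) Q := by
  rw [coeff_Lsq_mul',
    if_pos (by simp only [Finsupp.le_def, Finsupp.add_apply, Finsupp.single_apply]; decide),
    if_pos (by simp only [Finsupp.le_def, Finsupp.add_apply, Finsupp.single_apply]; decide),
    if_neg (by simp only [Finsupp.le_def, Finsupp.add_apply, Finsupp.single_apply]; decide),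
    show (Finsupp.single 0 3 + Finsupp.single 1 1 : Fin 2 →₀ ℕ) - Finsupp.single 0 2
        = Finsupp.single 0 1 + Finsupp.single 1 1 from by
      ext i; fin_cases i <;>
        (simp only [Finsupp.tsub_apply, Finsupp.add_apply, Finsupp.single_apply]; decide),
    show (Finsupp.single 0 3 + Finsupp.single 1 1 : Fin 2 →₀ ℕ)
        - (Finsupp.single 0 1 + Finsupp.single 1 1) = Finsupp.single 0 2 from by
      ext i; fin_cases i <;>
        (simp only [Finsupp.tsub_apply, Finsupp.add_apply, Finsupp.single_apply]; decide)]
  ring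

lemma e22' : (lhs (Finsupp.single 0 2 + Finsupp.single 1 2 : Fin 2 →₀ ℕ)) =
    p^2 * coeff (Finsupp.single 1 2) Q
    + 2*p*q * coeff (Finsupp.single 0 1 + Finsupp.single 1 1) Q
    + q^2 * coeff (Finsupp.single 0 2) Q := by
  rw [coeff_Lsq_mul',
    if_pos (by simp only [Finsupp.le_def, Finsupp.add_apply, Finsupp.single_apply]; decide),
    if_pos (by simp only [Finsupp.le_def, Finsupp.add_apply, Finsupp.single_apply]; decide),
    if_pos (by simp only [Finsupp.le_def, Finsupp.add_apply, Finsupp.single_apply]; decide),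
    show (Finsupp.single 0 2 + Finsupp.single 1 2 : Fin 2 →₀ ℕ) - Finsupp.single 0 2
        = Finsupp.single 1 2 from by
      ext i; fin_cases i <;>
        (simp only [Finsupp.tsub_apply, Finsupp.add_apply, Finsupp.single_apply]; decide),
    show (Finsupp.single 0 2 + Finsupp.single 1 2 : Fin 2 →₀ ℕ)
        - (Finsupp.single 0 1 + Finsupp.single 1 1)
        = Finsupp.single 0 1 + Finsupp.single 1 1 from by
      ext i; fin_cases i <;>
        (simp only [Finsupp.tsub_apply, Finsupp.add_apply, Finsupp.single_apply]; decide),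
    show (Finsupp.single 0 2 + Finsupp.single 1 2 : Fin 2 →₀ ℕ) - Finsupp.single 1 2
        = Finsupp.single 0 2 from by
      ext i; fin_cases i <;>
        (simp only [Finsupp.tsub_apply, Finsupp.add_apply, Finsupp.single_apply]; decide)]

lemma e13' : (lhs (Finsupp.single 0 1 + Finsupp.single 1 3 : Fin 2 →₀ ℕ)) =
    2*p*q * coeff (Finsupp.single 1 2) Q
    + q^2 * coeff (Finsupp.single 0 1 + Finsupp.single 1 1) Q := by
  rw [coeff_Lsq_mul',
    if_neg (by simp only [Finsupp.le_def, Finsupp.add_apply, Finsupp.single_apply]; decide),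
    if_pos (by simp only [Finsupp.le_def, Finsupp.add_apply, Finsupp.single_apply]; decide),
    if_pos (by simp only [Finsupp.le_def, Finsupp.add_apply, Finsupp.single_apply]; decide),
    show (Finsupp.single 0 1 + Finsupp.single 1 3 : Fin 2 →₀ ℕ)
        - (Finsupp.single 0 1 + Finsupp.single 1 1) = Finsupp.single 1 2 from by
      ext i; fin_cases i <;>
        (simp only [Finsupp.tsub_apply, Finsupp.add_apply, Finsupp.single_apply]; decide),
    show (Finsupp.single 0 1 + Finsupp.single 1 3 : Fin 2 →₀ ℕ) - Finsupp.single 1 2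
        = Finsupp.single 0 1 + Finsupp.single 1 1 from by
      ext i; fin_cases i <;>
        (simp only [Finsupp.tsub_apply, Finsupp.add_apply, Finsupp.single_apply]; decide)]
  ring

lemma e04' : (lhs (Finsupp.single 1 4 : Fin 2 →₀ ℕ)) = q^2 * coeff (Finsupp.single 1 2) Q := by
  rw [coeff_Lsq_mul',
    if_neg (by simp only [Finsupp.le_def, Finsupp.add_apply, Finsupp.single_apply]; decide),
    if_neg (by simp only [Finsupp.le_def, Finsupp.add_apply, Finsupp.single_apply]; decide),
    if_pos (by simp only [Finsupp.le_def, Finsupp.add_apply, Finsupp.single_apply]; decide),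
    show (Finsupp.single 1 4 : Fin 2 →₀ ℕ) - Finsupp.single 1 2 = Finsupp.single 1 2 from by
      ext i; fin_cases i <;>
        (simp only [Finsupp.tsub_apply, Finsupp.add_apply, Finsupp.single_apply]; decide)]
  ring

end extract

end stmt1aux

/-- Over an algebraically closed field, a nonzero binary quartic form with
vanishing invariant `S` that is divisible by the square of a nonzero linear form is divisible
by the cube of a nonzero linear form. -/
theorem stmt1 {k : Type*} [Field k] [IsAlgClosed k]
    (f : Fin 5 → k) (hf : binQuartic f ≠ 0) (hS : Sinv f = 0)
    (hsq : ∃ L : MvPolynomial (Fin 2) k, L.IsHomogeneous 1 ∧ L ≠ 0 ∧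
      L ^ 2 ∣ binQuartic f) :
    ∃ L : MvPolynomial (Fin 2) k, L.IsHomogeneous 1 ∧ L ≠ 0 ∧
      L ^ 3 ∣ binQuartic f := by
  obtain ⟨L, hL1, hL0, Q, hQ⟩ := hsq
  set p := coeff (Finsupp.single 0 1) L with hpdef
  set q := coeff (Finsupp.single 1 1) L with hqdef
  have hL : L = C p * X 0 + C q * X 1 := hom1_dec' L hL1
  set a := coeff (Finsupp.single 0 2) Q with hadef
  set b := coeff (Finsupp.single 0 1 + Finsupp.single 1 1) Q with hbdef
  set c := coeff (Finsupp.single 1 2) Q with hcdef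
  have h0 : f 0 = p^2*a := by rw [← cb0' f, hQ, hL, e40']
  have h1 : f 1 = p^2*b + 2*p*q*a := by rw [← cb1' f, hQ, hL, e31']
  have h2 : f 2 = p^2*c + 2*p*q*b + q^2*a := by rw [← cb2' f, hQ, hL, e22']
  have h3 : f 3 = 2*p*q*c + q^2*b := by rw [← cb3' f, hQ, hL, e13']
  have h4 : f 4 = q^2*c := by rw [← cb4' f, hQ, hL, e04']
  have hrel2 : (a*q^2 - b*p*q + c*p^2)^2 = 0 := by
    have h := hS
    simp only [Sinv, h0, h1, h2, h3, h4] at h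
    linear_combination h
  have rel : a*q^2 - b*p*q + c*p^2 = 0 := pow_eq_zero_iff two_ne_zero |>.mp hrel2
  have hpq : p ≠ 0 ∨ q ≠ 0 := by
    by_contra h
    push_neg at h
    exact hL0 (by rw [hL, h.1, h.2]; simp)
  have hvec : ∀ g : Fin 5 → k, f 0 = g 0 → f 1 = g 1 → f 2 = g 2 → f 3 = g 3 →
      f 4 = g 4 → f = g := by
    intro g e0 e1 e2 e3 e4
    funext i
    fin_cases i
    exacts [e0, e1, e2, e3, e4]
  rcases hpq with hp0 | hq0
  · refine ⟨L, hL1, hL0, C (a/p) * X 0 + C ((b*p - a*q)/p^2) * X 1, ?_⟩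
    rw [hL, cube_mul']
    congr 1
    refine hvec _ ?_ ?_ ?_ ?_ ?_ <;>
      simp only [Matrix.cons_val_zero, Matrix.cons_val_one, Matrix.head_cons,
        Matrix.cons_val_two, Matrix.tail_cons, Matrix.cons_val_three, Matrix.cons_val_four]
    · rw [h0]; field_simp
    · rw [h1]; field_simp; ring
    · rw [h2]; field_simp; linear_combination (1:k) * rel
    · rw [h3]; field_simp; linear_combination (2*q) * rel
    · rw [h4]; field_simp; linear_combination q^2 * rel
  · refine ⟨L, hL1, hL0, C ((b*q - c*p)/q^2) * X 0 + C (c/q) * X 1, ?_⟩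
    rw [hL, cube_mul']
    congr 1
    refine hvec _ ?_ ?_ ?_ ?_ ?_ <;>
      simp only [Matrix.cons_val_zero, Matrix.cons_val_one, Matrix.head_cons,
        Matrix.cons_val_two, Matrix.tail_cons, Matrix.cons_val_three, Matrix.cons_val_four]
    · rw [h0]; field_simp; linear_combination p^2 * rel
    · rw [h1]; field_simp; linear_combination (2*p) * rel
    · rw [h2]; field_simp; linear_combination (1:k) * rel
    · rw [h3]; field_simp; linear_combination (0:k) * rel
    · rw [h4]; field_simp
end
end

section
/- Let R be a commutative ring and define, for ternary quartic forms q₁, q₂, q₃ over R, the trilinear form t(q₁,q₂,q₃) = ⟨q₁, H(q₂+q₃) − H(q₂) − H(q₃)⟩. Then t is symmetric in its three arguments: t(q₁,q₂,q₃) = t(q_{σ(1)}, q_{σ(2)}, q_{σ(3)}) for every permutation σ of {1,2,3}. -/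
open MvPolynomial

noncomputable section

namespace Stmt2Aux


abbrev Idx := ℕ × ℕ × ℕ

def toF3 (t : Idx) : Fin 3 →₀ ℕ :=
  Finsupp.single 0 t.1 + Finsupp.single 1 t.2.1 + Finsupp.single 2 t.2.2

@[simp] lemma toF3_apply0 (t : Idx) : toF3 t 0 = t.1 := by
  simp [toF3, Finsupp.single_apply]
@[simp] lemma toF3_apply1 (t : Idx) : toF3 t 1 = t.2.1 := by
  simp [toF3, Finsupp.single_apply]
@[simp] lemma toF3_apply2 (t : Idx) : toF3 t 2 = t.2.2 := by
  simp [toF3, Finsupp.single_apply]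

lemma toF3_inj {s t : Idx} (h : toF3 s = toF3 t) : s = t := by
  have h0 : toF3 s 0 = toF3 t 0 := by rw [h]
  have h1 : toF3 s 1 = toF3 t 1 := by rw [h]
  have h2 : toF3 s 2 = toF3 t 2 := by rw [h]
  simp only [toF3_apply0, toF3_apply1, toF3_apply2] at h0 h1 h2
  exact Prod.ext h0 (Prod.ext h1 h2)

@[simp] lemma toF3_eq_iff {s t : Idx} : toF3 s = toF3 t ↔ s = t :=
  ⟨toF3_inj, fun h => h ▸ rfl⟩

lemma eq_toF3 (d : Fin 3 →₀ ℕ) : d = toF3 (d 0, d 1, d 2) := by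
  ext i
  fin_cases i <;> simp

lemma toF3_add (s t : Idx) : toF3 (s + t) = toF3 s + toF3 t := by
  ext i; fin_cases i <;> simp

def L15 : List Idx :=
  [(4,0,0),(3,1,0),(3,0,1),(2,2,0),(2,1,1),(2,0,2),(1,3,0),(1,2,1),(1,1,2),(1,0,3),
    (0,4,0),(0,3,1),(0,2,2),(0,1,3),(0,0,4)]

def F15 : Finset Idx := ⟨Multiset.ofList L15, by decide⟩

lemma mem_F15 {t : Idx} (h : t.1 + t.2.1 + t.2.2 = 4) : t ∈ F15 := by
  obtain ⟨a, b, c⟩ := t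
  simp only at h
  have ha : a ≤ 4 := by omega
  interval_cases a <;> (have hb : b ≤ 4 := by omega) <;> interval_cases b <;>
    (have hc : c ≤ 4 := by omega) <;> interval_cases c <;> revert h <;> decide

variable {R : Type*} [CommRing R]

lemma degree_eq (d : Fin 3 →₀ ℕ) : d.degree = d 0 + d 1 + d 2 := by
  rw [Finsupp.degree_apply]
  rw [Finset.sum_subset (Finset.subset_univ d.support)
    (by intro x _ hx; exact Finsupp.notMem_support_iff.mp hx)]
  simp [Fin.sum_univ_three]

lemma support_subset {q : MvPolynomial (Fin 3) R} (hq : q.IsHomogeneous 4) :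
    q.support ⊆ F15.image toF3 := by
  intro d hd
  have hdeg : d.degree = 4 := by
    by_contra h
    exact (mem_support_iff.mp hd) (hq.coeff_eq_zero h)
  rw [degree_eq] at hdeg
  refine Finset.mem_image.mpr ⟨(d 0, d 1, d 2), mem_F15 hdeg, (eq_toF3 d).symm⟩

/-- decomposition of a homogeneous quartic into its 15 coefficients -/
lemma decomp {q : MvPolynomial (Fin 3) R} (hq : q.IsHomogeneous 4) :
    q = ∑ t ∈ F15, monomial (toF3 t) (coeff (toF3 t) q) := by
  conv_lhs => rw [q.as_sum]
  rw [Finset.sum_subset (support_subset hq)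
    (by intro d _ hd; rw [notMem_support_iff.mp hd, map_zero])]
  rw [Finset.sum_image (fun s _ t _ h => toF3_inj h)]

def cW (t : Idx) : ℕ := t.1.factorial * t.2.1.factorial * t.2.2.factorial / 2

lemma pairQ_homog {q : MvPolynomial (Fin 3) R} (h : MvPolynomial (Fin 3) R)
    (hq : q.IsHomogeneous 4) :
    pairQ q h = ∑ t ∈ F15, (cW t : R) * coeff (toF3 t) q * coeff (toF3 t) h := by
  rw [pairQ, Finset.sum_subset (support_subset hq)
    (by intro d _ hd; rw [notMem_support_iff.mp hd]; ring)]
  rw [Finset.sum_image (fun s _ t _ h => toF3_inj h)]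
  refine Finset.sum_congr rfl fun t _ => ?_
  simp [cW]

variable {R : Type*} [CommRing R]

/-- coefficients of the substituted form -/
def bc (q : MvPolynomial (Fin 3) R) (i : Fin 5) : MvPolynomial (Fin 3) R :=
  binCoeff (gsub q) i

def SP {S : Type*} [CommRing S] (f g : Fin 5 → S) : S :=
  12*(f 0*g 4) + 12*(g 0*f 4) - 3*(f 1*g 3) - 3*(g 1*f 3) + 2*(f 2*g 2)

lemma binCoeff_add {S : Type*} [CommRing S] (a b : MvPolynomial (Fin 2) S) (i : Fin 5) :
    binCoeff (a + b) i = binCoeff a i + binCoeff b i := coeff_add _ _ _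

lemma bc_add (q q' : MvPolynomial (Fin 3) R) (i : Fin 5) :
    bc (q + q') i = bc q i + bc q' i := by
  rw [bc, gsub, map_add, ← gsub, ← gsub, binCoeff_add, bc, bc]

lemma SG_polar (q2 q3 : MvPolynomial (Fin 3) R) :
    SG (q2 + q3) - SG q2 - SG q3 = SP (bc q2) (bc q3) := by
  have hb : ∀ i, binCoeff (gsub (q2 + q3)) i = bc q2 i + bc q3 i := fun i => bc_add q2 q3 i
  simp only [SG, Sinv, SP, hb]
  show _ - (12 * bc q2 0 * bc q2 4 - 3 * bc q2 1 * bc q2 3 + bc q2 2 ^ 2)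
      - (12 * bc q3 0 * bc q3 4 - 3 * bc q3 1 * bc q3 3 + bc q3 2 ^ 2) = _
  ring

lemma monomial_toF3 (a b c : ℕ) :
    (monomial (toF3 (a, b, c)) (1 : R) : MvPolynomial (Fin 3) R) = X 0 ^ a * X 1 ^ b * X 2 ^ c := by
  rw [toF3, ← mul_one (1:R), ← monomial_mul, ← mul_one (1:R), ← monomial_mul,
    X_pow_eq_monomial, X_pow_eq_monomial, X_pow_eq_monomial, mul_one]

lemma bc_monomial (m : Fin 3 →₀ ℕ) (r : R) (i : Fin 5) :
    bc (monomial m r) i = C r * bc (monomial m 1) i := by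
  have h : (monomial m r : MvPolynomial (Fin 3) R) = C r * monomial m 1 := by
    rw [C_mul_monomial, mul_one]
  rw [h, bc, gsub, map_mul]
  have h2 : (aeval
    (![(C (- X 1) * X 0 - C (X 2) * X 1 : MvPolynomial (Fin 2) (MvPolynomial (Fin 3) R)),
       C (X 0) * X 0, C (X 0) * X 1]) (C r : MvPolynomial (Fin 3) R))
      = C (C r) := by
    rw [aeval_C]
    rfl
  rw [h2, binCoeff, coeff_C_mul, ← binCoeff, ← gsub, ← bc]

lemma bc_sum {ι : Type*} (s : Finset ι) (f : ι → MvPolynomial (Fin 3) R) (i : Fin 5) :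
    bc (∑ x ∈ s, f x) i = ∑ x ∈ s, bc (f x) i := by
  classical
  induction s using Finset.induction with
  | empty => simp [bc, gsub, binCoeff]
  | insert _ _ h ih => rw [Finset.sum_insert h, bc_add, ih, Finset.sum_insert h]

lemma bc_decomp {q : MvPolynomial (Fin 3) R} (hq : q.IsHomogeneous 4) (i : Fin 5) :
    bc q i = ∑ t ∈ F15, C (coeff (toF3 t) q) * bc (monomial (toF3 t) 1) i := by
  conv_lhs => rw [decomp hq]
  rw [bc_sum]
  exact Finset.sum_congr rfl fun t _ => bc_monomial _ _ i

/-- Fin 2 index equality -/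
lemma f2_eq_iff {s u s' u' : ℕ} :
    (Finsupp.single (0 : Fin 2) s + Finsupp.single 1 u
      = Finsupp.single 0 s' + Finsupp.single 1 u') ↔ (s = s' ∧ u = u') := by
  constructor
  · intro h
    have h0 : (Finsupp.single (0 : Fin 2) s + Finsupp.single 1 u : Fin 2 →₀ ℕ) 0
        = (Finsupp.single (0 : Fin 2) s' + Finsupp.single 1 u' : Fin 2 →₀ ℕ) 0 := by rw [h]
    have h1 : (Finsupp.single (0 : Fin 2) s + Finsupp.single 1 u : Fin 2 →₀ ℕ) 1
        = (Finsupp.single (0 : Fin 2) s' + Finsupp.single 1 u' : Fin 2 →₀ ℕ) 1 := by rw [h]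
    simp [Finsupp.single_apply] at h0 h1
    exact ⟨h0, h1⟩
  · rintro ⟨rfl, rfl⟩; rfl

lemma binCoeff_term {S : Type*} [CommRing S] (p : S) (s u : ℕ) (i : Fin 5) :
    binCoeff (C p * X 0 ^ s * X 1 ^ u : MvPolynomial (Fin 2) S) i
      = if s = 4 - (i : ℕ) ∧ u = (i : ℕ) then p else 0 := by
  have h : (C p * X 0 ^ s * X 1 ^ u : MvPolynomial (Fin 2) S)
      = monomial (Finsupp.single 0 s + Finsupp.single 1 u) p := by
    rw [X_pow_eq_monomial, X_pow_eq_monomial, C_mul_monomial, monomial_mul, mul_one, mul_one]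
  rw [binCoeff, h, coeff_monomial]
  simp only [f2_eq_iff]


lemma ch_0_0 : Nat.choose 0 0 = 1 := by rfl
lemma ch_1_0 : Nat.choose 1 0 = 1 := by rfl
lemma ch_1_1 : Nat.choose 1 1 = 1 := by rfl
lemma ch_2_0 : Nat.choose 2 0 = 1 := by rfl
lemma ch_2_1 : Nat.choose 2 1 = 2 := by rfl
lemma ch_2_2 : Nat.choose 2 2 = 1 := by rfl
lemma ch_3_0 : Nat.choose 3 0 = 1 := by rfl
lemma ch_3_1 : Nat.choose 3 1 = 3 := by rfl
lemma ch_3_2 : Nat.choose 3 2 = 3 := by rfl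
lemma ch_3_3 : Nat.choose 3 3 = 1 := by rfl
lemma ch_4_0 : Nat.choose 4 0 = 1 := by rfl
lemma ch_4_1 : Nat.choose 4 1 = 4 := by rfl
lemma ch_4_2 : Nat.choose 4 2 = 6 := by rfl
lemma ch_4_3 : Nat.choose 4 3 = 4 := by rfl
lemma ch_4_4 : Nat.choose 4 4 = 1 := by rfl

def bcC (t : Idx) (i : ℕ) : ℤ :=
  if t.2.2 ≤ i ∧ i + t.2.1 ≤ 4 then (-1) ^ t.1 * (t.1.choose (4 - i - t.2.1) : ℤ) else 0
def bcEu (t : Idx) : ℕ := t.2.1 + t.2.2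
def bcEv (t : Idx) (i : ℕ) : ℕ := 4 - i - t.2.1
def bcEw (t : Idx) (i : ℕ) : ℕ := i - t.2.2

def bcTarget (t : Idx) (i : Fin 5) : MvPolynomial (Fin 3) R :=
  C ((bcC t (i : ℕ) : ℤ) : R) * X 0 ^ bcEu t * X 1 ^ bcEv t (i : ℕ) * X 2 ^ bcEw t (i : ℕ)

lemma hg_4_0_0 : gsub ((X 0 : MvPolynomial (Fin 3) R) ^ 4 * X 1 ^ 0 * X 2 ^ 0) =
    C ((1 : MvPolynomial (Fin 3) R) * X 0 ^ 0 * X 1 ^ 4 * X 2 ^ 0) * X 0 ^ 4 * X 1 ^ 0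
    + C ((4 : MvPolynomial (Fin 3) R) * X 0 ^ 0 * X 1 ^ 3 * X 2 ^ 1) * X 0 ^ 3 * X 1 ^ 1
    + C ((6 : MvPolynomial (Fin 3) R) * X 0 ^ 0 * X 1 ^ 2 * X 2 ^ 2) * X 0 ^ 2 * X 1 ^ 2
    + C ((4 : MvPolynomial (Fin 3) R) * X 0 ^ 0 * X 1 ^ 1 * X 2 ^ 3) * X 0 ^ 1 * X 1 ^ 3
    + C ((1 : MvPolynomial (Fin 3) R) * X 0 ^ 0 * X 1 ^ 0 * X 2 ^ 4) * X 0 ^ 0 * X 1 ^ 4 := by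
  simp only [gsub, map_mul, map_pow, aeval_X, Matrix.cons_val_zero, Matrix.cons_val_one,
    Matrix.head_cons, Matrix.cons_val_two, Matrix.tail_cons, map_neg, map_ofNat, C_mul, C_pow, C_1]
  ring

lemma hg_3_1_0 : gsub ((X 0 : MvPolynomial (Fin 3) R) ^ 3 * X 1 ^ 1 * X 2 ^ 0) =
    C (((-1) : MvPolynomial (Fin 3) R) * X 0 ^ 1 * X 1 ^ 3 * X 2 ^ 0) * X 0 ^ 4 * X 1 ^ 0
    + C (((-3) : MvPolynomial (Fin 3) R) * X 0 ^ 1 * X 1 ^ 2 * X 2 ^ 1) * X 0 ^ 3 * X 1 ^ 1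
    + C (((-3) : MvPolynomial (Fin 3) R) * X 0 ^ 1 * X 1 ^ 1 * X 2 ^ 2) * X 0 ^ 2 * X 1 ^ 2
    + C (((-1) : MvPolynomial (Fin 3) R) * X 0 ^ 1 * X 1 ^ 0 * X 2 ^ 3) * X 0 ^ 1 * X 1 ^ 3 := by
  simp only [gsub, map_mul, map_pow, aeval_X, Matrix.cons_val_zero, Matrix.cons_val_one,
    Matrix.head_cons, Matrix.cons_val_two, Matrix.tail_cons, map_neg, map_ofNat, C_mul, C_pow, C_1]
  ring

lemma hg_3_0_1 : gsub ((X 0 : MvPolynomial (Fin 3) R) ^ 3 * X 1 ^ 0 * X 2 ^ 1) =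
    C (((-1) : MvPolynomial (Fin 3) R) * X 0 ^ 1 * X 1 ^ 3 * X 2 ^ 0) * X 0 ^ 3 * X 1 ^ 1
    + C (((-3) : MvPolynomial (Fin 3) R) * X 0 ^ 1 * X 1 ^ 2 * X 2 ^ 1) * X 0 ^ 2 * X 1 ^ 2
    + C (((-3) : MvPolynomial (Fin 3) R) * X 0 ^ 1 * X 1 ^ 1 * X 2 ^ 2) * X 0 ^ 1 * X 1 ^ 3
    + C (((-1) : MvPolynomial (Fin 3) R) * X 0 ^ 1 * X 1 ^ 0 * X 2 ^ 3) * X 0 ^ 0 * X 1 ^ 4 := by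
  simp only [gsub, map_mul, map_pow, aeval_X, Matrix.cons_val_zero, Matrix.cons_val_one,
    Matrix.head_cons, Matrix.cons_val_two, Matrix.tail_cons, map_neg, map_ofNat, C_mul, C_pow, C_1]
  ring

lemma hg_2_2_0 : gsub ((X 0 : MvPolynomial (Fin 3) R) ^ 2 * X 1 ^ 2 * X 2 ^ 0) =
    C ((1 : MvPolynomial (Fin 3) R) * X 0 ^ 2 * X 1 ^ 2 * X 2 ^ 0) * X 0 ^ 4 * X 1 ^ 0
    + C ((2 : MvPolynomial (Fin 3) R) * X 0 ^ 2 * X 1 ^ 1 * X 2 ^ 1) * X 0 ^ 3 * X 1 ^ 1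
    + C ((1 : MvPolynomial (Fin 3) R) * X 0 ^ 2 * X 1 ^ 0 * X 2 ^ 2) * X 0 ^ 2 * X 1 ^ 2 := by
  simp only [gsub, map_mul, map_pow, aeval_X, Matrix.cons_val_zero, Matrix.cons_val_one,
    Matrix.head_cons, Matrix.cons_val_two, Matrix.tail_cons, map_neg, map_ofNat, C_mul, C_pow, C_1]
  ring

lemma hg_2_1_1 : gsub ((X 0 : MvPolynomial (Fin 3) R) ^ 2 * X 1 ^ 1 * X 2 ^ 1) =
    C ((1 : MvPolynomial (Fin 3) R) * X 0 ^ 2 * X 1 ^ 2 * X 2 ^ 0) * X 0 ^ 3 * X 1 ^ 1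
    + C ((2 : MvPolynomial (Fin 3) R) * X 0 ^ 2 * X 1 ^ 1 * X 2 ^ 1) * X 0 ^ 2 * X 1 ^ 2
    + C ((1 : MvPolynomial (Fin 3) R) * X 0 ^ 2 * X 1 ^ 0 * X 2 ^ 2) * X 0 ^ 1 * X 1 ^ 3 := by
  simp only [gsub, map_mul, map_pow, aeval_X, Matrix.cons_val_zero, Matrix.cons_val_one,
    Matrix.head_cons, Matrix.cons_val_two, Matrix.tail_cons, map_neg, map_ofNat, C_mul, C_pow, C_1]
  ring

lemma hg_2_0_2 : gsub ((X 0 : MvPolynomial (Fin 3) R) ^ 2 * X 1 ^ 0 * X 2 ^ 2) =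
    C ((1 : MvPolynomial (Fin 3) R) * X 0 ^ 2 * X 1 ^ 2 * X 2 ^ 0) * X 0 ^ 2 * X 1 ^ 2
    + C ((2 : MvPolynomial (Fin 3) R) * X 0 ^ 2 * X 1 ^ 1 * X 2 ^ 1) * X 0 ^ 1 * X 1 ^ 3
    + C ((1 : MvPolynomial (Fin 3) R) * X 0 ^ 2 * X 1 ^ 0 * X 2 ^ 2) * X 0 ^ 0 * X 1 ^ 4 := by
  simp only [gsub, map_mul, map_pow, aeval_X, Matrix.cons_val_zero, Matrix.cons_val_one,
    Matrix.head_cons, Matrix.cons_val_two, Matrix.tail_cons, map_neg, map_ofNat, C_mul, C_pow, C_1]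
  ring

lemma hg_1_3_0 : gsub ((X 0 : MvPolynomial (Fin 3) R) ^ 1 * X 1 ^ 3 * X 2 ^ 0) =
    C (((-1) : MvPolynomial (Fin 3) R) * X 0 ^ 3 * X 1 ^ 1 * X 2 ^ 0) * X 0 ^ 4 * X 1 ^ 0
    + C (((-1) : MvPolynomial (Fin 3) R) * X 0 ^ 3 * X 1 ^ 0 * X 2 ^ 1) * X 0 ^ 3 * X 1 ^ 1 := by
  simp only [gsub, map_mul, map_pow, aeval_X, Matrix.cons_val_zero, Matrix.cons_val_one,
    Matrix.head_cons, Matrix.cons_val_two, Matrix.tail_cons, map_neg, map_ofNat, C_mul, C_pow, C_1]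
  ring

lemma hg_1_2_1 : gsub ((X 0 : MvPolynomial (Fin 3) R) ^ 1 * X 1 ^ 2 * X 2 ^ 1) =
    C (((-1) : MvPolynomial (Fin 3) R) * X 0 ^ 3 * X 1 ^ 1 * X 2 ^ 0) * X 0 ^ 3 * X 1 ^ 1
    + C (((-1) : MvPolynomial (Fin 3) R) * X 0 ^ 3 * X 1 ^ 0 * X 2 ^ 1) * X 0 ^ 2 * X 1 ^ 2 := by
  simp only [gsub, map_mul, map_pow, aeval_X, Matrix.cons_val_zero, Matrix.cons_val_one,
    Matrix.head_cons, Matrix.cons_val_two, Matrix.tail_cons, map_neg, map_ofNat, C_mul, C_pow, C_1]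
  ring

lemma hg_1_1_2 : gsub ((X 0 : MvPolynomial (Fin 3) R) ^ 1 * X 1 ^ 1 * X 2 ^ 2) =
    C (((-1) : MvPolynomial (Fin 3) R) * X 0 ^ 3 * X 1 ^ 1 * X 2 ^ 0) * X 0 ^ 2 * X 1 ^ 2
    + C (((-1) : MvPolynomial (Fin 3) R) * X 0 ^ 3 * X 1 ^ 0 * X 2 ^ 1) * X 0 ^ 1 * X 1 ^ 3 := by
  simp only [gsub, map_mul, map_pow, aeval_X, Matrix.cons_val_zero, Matrix.cons_val_one,
    Matrix.head_cons, Matrix.cons_val_two, Matrix.tail_cons, map_neg, map_ofNat, C_mul, C_pow, C_1]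
  ring

lemma hg_1_0_3 : gsub ((X 0 : MvPolynomial (Fin 3) R) ^ 1 * X 1 ^ 0 * X 2 ^ 3) =
    C (((-1) : MvPolynomial (Fin 3) R) * X 0 ^ 3 * X 1 ^ 1 * X 2 ^ 0) * X 0 ^ 1 * X 1 ^ 3
    + C (((-1) : MvPolynomial (Fin 3) R) * X 0 ^ 3 * X 1 ^ 0 * X 2 ^ 1) * X 0 ^ 0 * X 1 ^ 4 := by
  simp only [gsub, map_mul, map_pow, aeval_X, Matrix.cons_val_zero, Matrix.cons_val_one,
    Matrix.head_cons, Matrix.cons_val_two, Matrix.tail_cons, map_neg, map_ofNat, C_mul, C_pow, C_1]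
  ring

lemma hg_0_4_0 : gsub ((X 0 : MvPolynomial (Fin 3) R) ^ 0 * X 1 ^ 4 * X 2 ^ 0) =
    C ((1 : MvPolynomial (Fin 3) R) * X 0 ^ 4 * X 1 ^ 0 * X 2 ^ 0) * X 0 ^ 4 * X 1 ^ 0 := by
  simp only [gsub, map_mul, map_pow, aeval_X, Matrix.cons_val_zero, Matrix.cons_val_one,
    Matrix.head_cons, Matrix.cons_val_two, Matrix.tail_cons, map_neg, map_ofNat, C_mul, C_pow, C_1]
  ring

lemma hg_0_3_1 : gsub ((X 0 : MvPolynomial (Fin 3) R) ^ 0 * X 1 ^ 3 * X 2 ^ 1) =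
    C ((1 : MvPolynomial (Fin 3) R) * X 0 ^ 4 * X 1 ^ 0 * X 2 ^ 0) * X 0 ^ 3 * X 1 ^ 1 := by
  simp only [gsub, map_mul, map_pow, aeval_X, Matrix.cons_val_zero, Matrix.cons_val_one,
    Matrix.head_cons, Matrix.cons_val_two, Matrix.tail_cons, map_neg, map_ofNat, C_mul, C_pow, C_1]
  ring

lemma hg_0_2_2 : gsub ((X 0 : MvPolynomial (Fin 3) R) ^ 0 * X 1 ^ 2 * X 2 ^ 2) =
    C ((1 : MvPolynomial (Fin 3) R) * X 0 ^ 4 * X 1 ^ 0 * X 2 ^ 0) * X 0 ^ 2 * X 1 ^ 2 := by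
  simp only [gsub, map_mul, map_pow, aeval_X, Matrix.cons_val_zero, Matrix.cons_val_one,
    Matrix.head_cons, Matrix.cons_val_two, Matrix.tail_cons, map_neg, map_ofNat, C_mul, C_pow, C_1]
  ring

lemma hg_0_1_3 : gsub ((X 0 : MvPolynomial (Fin 3) R) ^ 0 * X 1 ^ 1 * X 2 ^ 3) =
    C ((1 : MvPolynomial (Fin 3) R) * X 0 ^ 4 * X 1 ^ 0 * X 2 ^ 0) * X 0 ^ 1 * X 1 ^ 3 := by
  simp only [gsub, map_mul, map_pow, aeval_X, Matrix.cons_val_zero, Matrix.cons_val_one,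
    Matrix.head_cons, Matrix.cons_val_two, Matrix.tail_cons, map_neg, map_ofNat, C_mul, C_pow, C_1]
  ring

lemma hg_0_0_4 : gsub ((X 0 : MvPolynomial (Fin 3) R) ^ 0 * X 1 ^ 0 * X 2 ^ 4) =
    C ((1 : MvPolynomial (Fin 3) R) * X 0 ^ 4 * X 1 ^ 0 * X 2 ^ 0) * X 0 ^ 0 * X 1 ^ 4 := by
  simp only [gsub, map_mul, map_pow, aeval_X, Matrix.cons_val_zero, Matrix.cons_val_one,
    Matrix.head_cons, Matrix.cons_val_two, Matrix.tail_cons, map_neg, map_ofNat, C_mul, C_pow, C_1]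
  ring

lemma bcM_4_0_0 : ∀ i : Fin 5, bc (monomial (toF3 (4,0,0)) (1:R)) i = bcTarget (4,0,0) i := by
  intro i
  simp only [bc, monomial_toF3, hg_4_0_0]
  unfold bcTarget
  fin_cases i <;>
    simp only [binCoeff_add, binCoeff_term] <;>
    norm_num [bcC, bcEu, bcEv, bcEw, map_neg, map_ofNat, ch_0_0, ch_1_0, ch_1_1, ch_2_0, ch_2_1, ch_2_2, ch_3_0, ch_3_1, ch_3_2, ch_3_3, ch_4_0, ch_4_1, ch_4_2, ch_4_3, ch_4_4]

lemma bcM_3_1_0 : ∀ i : Fin 5, bc (monomial (toF3 (3,1,0)) (1:R)) i = bcTarget (3,1,0) i := by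
  intro i
  simp only [bc, monomial_toF3, hg_3_1_0]
  unfold bcTarget
  fin_cases i <;>
    simp only [binCoeff_add, binCoeff_term] <;>
    norm_num [bcC, bcEu, bcEv, bcEw, map_neg, map_ofNat, ch_0_0, ch_1_0, ch_1_1, ch_2_0, ch_2_1, ch_2_2, ch_3_0, ch_3_1, ch_3_2, ch_3_3, ch_4_0, ch_4_1, ch_4_2, ch_4_3, ch_4_4]

lemma bcM_3_0_1 : ∀ i : Fin 5, bc (monomial (toF3 (3,0,1)) (1:R)) i = bcTarget (3,0,1) i := by
  intro i
  simp only [bc, monomial_toF3, hg_3_0_1]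
  unfold bcTarget
  fin_cases i <;>
    simp only [binCoeff_add, binCoeff_term] <;>
    norm_num [bcC, bcEu, bcEv, bcEw, map_neg, map_ofNat, ch_0_0, ch_1_0, ch_1_1, ch_2_0, ch_2_1, ch_2_2, ch_3_0, ch_3_1, ch_3_2, ch_3_3, ch_4_0, ch_4_1, ch_4_2, ch_4_3, ch_4_4]

lemma bcM_2_2_0 : ∀ i : Fin 5, bc (monomial (toF3 (2,2,0)) (1:R)) i = bcTarget (2,2,0) i := by
  intro i
  simp only [bc, monomial_toF3, hg_2_2_0]
  unfold bcTarget
  fin_cases i <;>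
    simp only [binCoeff_add, binCoeff_term] <;>
    norm_num [bcC, bcEu, bcEv, bcEw, map_neg, map_ofNat, ch_0_0, ch_1_0, ch_1_1, ch_2_0, ch_2_1, ch_2_2, ch_3_0, ch_3_1, ch_3_2, ch_3_3, ch_4_0, ch_4_1, ch_4_2, ch_4_3, ch_4_4]

lemma bcM_2_1_1 : ∀ i : Fin 5, bc (monomial (toF3 (2,1,1)) (1:R)) i = bcTarget (2,1,1) i := by
  intro i
  simp only [bc, monomial_toF3, hg_2_1_1]
  unfold bcTarget
  fin_cases i <;>
    simp only [binCoeff_add, binCoeff_term] <;>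
    norm_num [bcC, bcEu, bcEv, bcEw, map_neg, map_ofNat, ch_0_0, ch_1_0, ch_1_1, ch_2_0, ch_2_1, ch_2_2, ch_3_0, ch_3_1, ch_3_2, ch_3_3, ch_4_0, ch_4_1, ch_4_2, ch_4_3, ch_4_4]

lemma bcM_2_0_2 : ∀ i : Fin 5, bc (monomial (toF3 (2,0,2)) (1:R)) i = bcTarget (2,0,2) i := by
  intro i
  simp only [bc, monomial_toF3, hg_2_0_2]
  unfold bcTarget
  fin_cases i <;>
    simp only [binCoeff_add, binCoeff_term] <;>
    norm_num [bcC, bcEu, bcEv, bcEw, map_neg, map_ofNat, ch_0_0, ch_1_0, ch_1_1, ch_2_0, ch_2_1, ch_2_2, ch_3_0, ch_3_1, ch_3_2, ch_3_3, ch_4_0, ch_4_1, ch_4_2, ch_4_3, ch_4_4]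

lemma bcM_1_3_0 : ∀ i : Fin 5, bc (monomial (toF3 (1,3,0)) (1:R)) i = bcTarget (1,3,0) i := by
  intro i
  simp only [bc, monomial_toF3, hg_1_3_0]
  unfold bcTarget
  fin_cases i <;>
    simp only [binCoeff_add, binCoeff_term] <;>
    norm_num [bcC, bcEu, bcEv, bcEw, map_neg, map_ofNat, ch_0_0, ch_1_0, ch_1_1, ch_2_0, ch_2_1, ch_2_2, ch_3_0, ch_3_1, ch_3_2, ch_3_3, ch_4_0, ch_4_1, ch_4_2, ch_4_3, ch_4_4]

lemma bcM_1_2_1 : ∀ i : Fin 5, bc (monomial (toF3 (1,2,1)) (1:R)) i = bcTarget (1,2,1) i := by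
  intro i
  simp only [bc, monomial_toF3, hg_1_2_1]
  unfold bcTarget
  fin_cases i <;>
    simp only [binCoeff_add, binCoeff_term] <;>
    norm_num [bcC, bcEu, bcEv, bcEw, map_neg, map_ofNat, ch_0_0, ch_1_0, ch_1_1, ch_2_0, ch_2_1, ch_2_2, ch_3_0, ch_3_1, ch_3_2, ch_3_3, ch_4_0, ch_4_1, ch_4_2, ch_4_3, ch_4_4]

lemma bcM_1_1_2 : ∀ i : Fin 5, bc (monomial (toF3 (1,1,2)) (1:R)) i = bcTarget (1,1,2) i := by
  intro i
  simp only [bc, monomial_toF3, hg_1_1_2]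
  unfold bcTarget
  fin_cases i <;>
    simp only [binCoeff_add, binCoeff_term] <;>
    norm_num [bcC, bcEu, bcEv, bcEw, map_neg, map_ofNat, ch_0_0, ch_1_0, ch_1_1, ch_2_0, ch_2_1, ch_2_2, ch_3_0, ch_3_1, ch_3_2, ch_3_3, ch_4_0, ch_4_1, ch_4_2, ch_4_3, ch_4_4]

lemma bcM_1_0_3 : ∀ i : Fin 5, bc (monomial (toF3 (1,0,3)) (1:R)) i = bcTarget (1,0,3) i := by
  intro i
  simp only [bc, monomial_toF3, hg_1_0_3]
  unfold bcTarget
  fin_cases i <;>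
    simp only [binCoeff_add, binCoeff_term] <;>
    norm_num [bcC, bcEu, bcEv, bcEw, map_neg, map_ofNat, ch_0_0, ch_1_0, ch_1_1, ch_2_0, ch_2_1, ch_2_2, ch_3_0, ch_3_1, ch_3_2, ch_3_3, ch_4_0, ch_4_1, ch_4_2, ch_4_3, ch_4_4]

lemma bcM_0_4_0 : ∀ i : Fin 5, bc (monomial (toF3 (0,4,0)) (1:R)) i = bcTarget (0,4,0) i := by
  intro i
  simp only [bc, monomial_toF3, hg_0_4_0]
  unfold bcTarget
  fin_cases i <;>
    simp only [binCoeff_add, binCoeff_term] <;>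
    norm_num [bcC, bcEu, bcEv, bcEw, map_neg, map_ofNat, ch_0_0, ch_1_0, ch_1_1, ch_2_0, ch_2_1, ch_2_2, ch_3_0, ch_3_1, ch_3_2, ch_3_3, ch_4_0, ch_4_1, ch_4_2, ch_4_3, ch_4_4]

lemma bcM_0_3_1 : ∀ i : Fin 5, bc (monomial (toF3 (0,3,1)) (1:R)) i = bcTarget (0,3,1) i := by
  intro i
  simp only [bc, monomial_toF3, hg_0_3_1]
  unfold bcTarget
  fin_cases i <;>
    simp only [binCoeff_add, binCoeff_term] <;>
    norm_num [bcC, bcEu, bcEv, bcEw, map_neg, map_ofNat, ch_0_0, ch_1_0, ch_1_1, ch_2_0, ch_2_1, ch_2_2, ch_3_0, ch_3_1, ch_3_2, ch_3_3, ch_4_0, ch_4_1, ch_4_2, ch_4_3, ch_4_4]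

lemma bcM_0_2_2 : ∀ i : Fin 5, bc (monomial (toF3 (0,2,2)) (1:R)) i = bcTarget (0,2,2) i := by
  intro i
  simp only [bc, monomial_toF3, hg_0_2_2]
  unfold bcTarget
  fin_cases i <;>
    simp only [binCoeff_add, binCoeff_term] <;>
    norm_num [bcC, bcEu, bcEv, bcEw, map_neg, map_ofNat, ch_0_0, ch_1_0, ch_1_1, ch_2_0, ch_2_1, ch_2_2, ch_3_0, ch_3_1, ch_3_2, ch_3_3, ch_4_0, ch_4_1, ch_4_2, ch_4_3, ch_4_4]

lemma bcM_0_1_3 : ∀ i : Fin 5, bc (monomial (toF3 (0,1,3)) (1:R)) i = bcTarget (0,1,3) i := by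
  intro i
  simp only [bc, monomial_toF3, hg_0_1_3]
  unfold bcTarget
  fin_cases i <;>
    simp only [binCoeff_add, binCoeff_term] <;>
    norm_num [bcC, bcEu, bcEv, bcEw, map_neg, map_ofNat, ch_0_0, ch_1_0, ch_1_1, ch_2_0, ch_2_1, ch_2_2, ch_3_0, ch_3_1, ch_3_2, ch_3_3, ch_4_0, ch_4_1, ch_4_2, ch_4_3, ch_4_4]

lemma bcM_0_0_4 : ∀ i : Fin 5, bc (monomial (toF3 (0,0,4)) (1:R)) i = bcTarget (0,0,4) i := by
  intro i
  simp only [bc, monomial_toF3, hg_0_0_4]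
  unfold bcTarget
  fin_cases i <;>
    simp only [binCoeff_add, binCoeff_term] <;>
    norm_num [bcC, bcEu, bcEv, bcEw, map_neg, map_ofNat, ch_0_0, ch_1_0, ch_1_1, ch_2_0, ch_2_1, ch_2_2, ch_3_0, ch_3_1, ch_3_2, ch_3_3, ch_4_0, ch_4_1, ch_4_2, ch_4_3, ch_4_4]

lemma bcM_all : ∀ t ∈ F15, ∀ i : Fin 5, bc (monomial (toF3 t) (1:R)) i = bcTarget t i := by
  intro t ht
  have hmem : t ∈ L15 := ht
  fin_cases hmem
  · exact bcM_4_0_0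
  · exact bcM_3_1_0
  · exact bcM_3_0_1
  · exact bcM_2_2_0
  · exact bcM_2_1_1
  · exact bcM_2_0_2
  · exact bcM_1_3_0
  · exact bcM_1_2_1
  · exact bcM_1_1_2
  · exact bcM_1_0_3
  · exact bcM_0_4_0
  · exact bcM_0_3_1
  · exact bcM_0_2_2
  · exact bcM_0_1_3
  · exact bcM_0_0_4

def pick (t s : Idx) (i j : ℕ) (m : Idx) : ℤ :=
  if bcEu t + bcEu s = m.1 + 4 ∧ bcEv t i + bcEv s j = m.2.1 ∧ bcEw t i + bcEw s j = m.2.2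
  then bcC t i * bcC s j else 0

def kZ (t s m : Idx) : ℤ :=
  12 * pick t s 0 4 m + 12 * pick s t 0 4 m - 3 * pick t s 1 3 m - 3 * pick s t 1 3 m
    + 2 * pick t s 2 2 m

lemma pick_swap (t s : Idx) (i j : ℕ) (m : Idx) : pick t s i j m = pick s t j i m := by
  unfold pick
  have h : (bcEu t + bcEu s = m.1 + 4 ∧ bcEv t i + bcEv s j = m.2.1
        ∧ bcEw t i + bcEw s j = m.2.2)
      ↔ (bcEu s + bcEu t = m.1 + 4 ∧ bcEv s j + bcEv t i = m.2.1
        ∧ bcEw s j + bcEw t i = m.2.2) := by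
    constructor <;> rintro ⟨h1, h2, h3⟩ <;> exact ⟨by omega, by omega, by omega⟩
  rw [if_congr h (mul_comm _ _) rfl]

lemma kZ_comm (t s m : Idx) : kZ t s m = kZ s t m := by
  unfold kZ
  rw [pick_swap t s 2 2 m]
  ring

lemma coeff_CXXX (k : R) (α β γ : ℕ) (d : Idx) :
    coeff (toF3 d) (C k * X 0 ^ α * X 1 ^ β * X 2 ^ γ : MvPolynomial (Fin 3) R)
      = if α = d.1 ∧ β = d.2.1 ∧ γ = d.2.2 then k else 0 := by
  have h : (C k * X 0 ^ α * X 1 ^ β * X 2 ^ γ : MvPolynomial (Fin 3) R)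
      = monomial (toF3 (α, β, γ)) k := by
    rw [show (monomial (toF3 (α, β, γ)) k : MvPolynomial (Fin 3) R)
        = C k * monomial (toF3 (α, β, γ)) 1 by rw [C_mul_monomial, mul_one], monomial_toF3]
    ring
  rw [h, coeff_monomial]
  have hiff : (toF3 (α, β, γ) = toF3 d) ↔ (α = d.1 ∧ β = d.2.1 ∧ γ = d.2.2) := by
    rw [toF3_eq_iff]
    simp [Prod.ext_iff]
  simp only [hiff]

lemma coeff_SP_target (t s m : Idx) :
    coeff (toF3 (m.1 + 4, m.2.1, m.2.2))
        (SP (fun i => bcTarget (R := R) t i) (fun i => bcTarget s i))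
      = ((kZ t s m : ℤ) : R) := by
  have hprod : ∀ (x y : Idx) (i j : Fin 5),
      (bcTarget (R := R) x i * bcTarget y j)
        = C ((bcC x (i:ℕ) * bcC y (j:ℕ) : ℤ) : R) * X 0 ^ (bcEu x + bcEu y)
            * X 1 ^ (bcEv x (i:ℕ) + bcEv y (j:ℕ)) * X 2 ^ (bcEw x (i:ℕ) + bcEw y (j:ℕ)) := by
    intro x y i j
    unfold bcTarget
    rw [Int.cast_mul, map_mul]
    ring
  have hSP : SP (fun i => bcTarget (R := R) t i) (fun i => bcTarget s i)
      = C ((12:R)) * (bcTarget t 0 * bcTarget s 4) + C (12:R) * (bcTarget s 0 * bcTarget t 4)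
        - C (3:R) * (bcTarget t 1 * bcTarget s 3) - C (3:R) * (bcTarget s 1 * bcTarget t 3)
        + C (2:R) * (bcTarget t 2 * bcTarget s 2) := by
    simp only [SP, map_ofNat]
    try ring
  rw [hSP]
  simp only [hprod]
  have c0 : ((0 : Fin 5) : ℕ) = 0 := rfl
  have c1 : ((1 : Fin 5) : ℕ) = 1 := rfl
  have c2 : ((2 : Fin 5) : ℕ) = 2 := rfl
  have c3 : ((3 : Fin 5) : ℕ) = 3 := rfl
  have c4 : ((4 : Fin 5) : ℕ) = 4 := rfl
  simp only [c0, c1, c2, c3, c4, coeff_add, coeff_sub, coeff_C_mul, coeff_CXXX]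
  rw [kZ]
  unfold pick
  try norm_num
  try push_cast [apply_ite (fun x : ℤ => (x : R))]
  try ring

lemma sum_merge5 {S : Type*} [CommRing S] {ι : Type*} (F : Finset ι) (u1 u2 u3 u4 u5 : ι → S) :
    (∑ x ∈ F, u1 x) + (∑ x ∈ F, u2 x) - (∑ x ∈ F, u3 x) - (∑ x ∈ F, u4 x) + (∑ x ∈ F, u5 x)
      = ∑ x ∈ F, (u1 x + u2 x - u3 x - u4 x + u5 x) := by
  rw [← Finset.sum_add_distrib, ← Finset.sum_sub_distrib, ← Finset.sum_sub_distrib,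
    ← Finset.sum_add_distrib]

lemma SP_bilinear {S : Type*} [CommRing S] {ι : Type*} (F : Finset ι) (a b : ι → S)
    (f g : ι → Fin 5 → S) :
    SP (fun i => ∑ t ∈ F, a t * f t i) (fun i => ∑ s ∈ F, b s * g s i)
      = ∑ t ∈ F, ∑ s ∈ F, (a t * b s) * SP (f t) (g s) := by
  simp only [SP]
  rw [mul_comm (∑ s ∈ F, b s * g s 0) (∑ t ∈ F, a t * f t 4),
    mul_comm (∑ s ∈ F, b s * g s 1) (∑ t ∈ F, a t * f t 3)]
  simp only [Finset.sum_mul_sum]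
  simp only [Finset.mul_sum]
  rw [sum_merge5]
  refine Finset.sum_congr rfl fun t _ => ?_
  rw [sum_merge5]
  exact Finset.sum_congr rfl fun s _ => by ring

lemma bc_decomp' {q : MvPolynomial (Fin 3) R} (hq : q.IsHomogeneous 4) (i : Fin 5) :
    bc q i = ∑ t ∈ F15, C (coeff (toF3 t) q) * bcTarget t i := by
  rw [bc_decomp hq]
  exact Finset.sum_congr rfl fun t ht => by rw [bcM_all t ht i]

lemma coeff_SP_bc {q2 q3 : MvPolynomial (Fin 3) R} (h2 : q2.IsHomogeneous 4)
    (h3 : q3.IsHomogeneous 4) (m : Idx) :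
    coeff (toF3 (m.1 + 4, m.2.1, m.2.2)) (SP (bc q2) (bc q3))
      = ∑ t ∈ F15, ∑ s ∈ F15,
          coeff (toF3 t) q2 * coeff (toF3 s) q3 * ((kZ t s m : ℤ) : R) := by
  have e2 : bc q2 = fun i => ∑ t ∈ F15, C (coeff (toF3 t) q2) * bcTarget t i :=
    funext fun i => bc_decomp' h2 i
  have e3 : bc q3 = fun i => ∑ s ∈ F15, C (coeff (toF3 s) q3) * bcTarget s i :=
    funext fun i => bc_decomp' h3 i
  rw [e2, e3, SP_bilinear]
  rw [coeff_sum]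
  refine Finset.sum_congr rfl fun t _ => ?_
  rw [coeff_sum]
  refine Finset.sum_congr rfl fun s _ => ?_
  rw [← C_mul, coeff_C_mul, coeff_SP_target]
  try ring

lemma toF3_shift (m : Idx) :
    toF3 (m.1 + 4, m.2.1, m.2.2) = Finsupp.single 0 4 + toF3 m := by
  ext i; fin_cases i <;> simp [toF3, Finsupp.single_apply] <;> omega

lemma master {H : MvPolynomial (Fin 3) R → MvPolynomial (Fin 3) R}
    (hH : ∀ p : MvPolynomial (Fin 3) R, p.IsHomogeneous 4 → X 0 ^ 4 * H p = SG p)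
    {q1 q2 q3 : MvPolynomial (Fin 3) R} (h1 : q1.IsHomogeneous 4)
    (h2 : q2.IsHomogeneous 4) (h3 : q3.IsHomogeneous 4) :
    pairQ q1 (H (q2 + q3) - H q2 - H q3)
      = ∑ m ∈ F15, ∑ t ∈ F15, ∑ s ∈ F15,
          (cW m : R) * coeff (toF3 m) q1 * coeff (toF3 t) q2 * coeff (toF3 s) q3
            * ((kZ t s m : ℤ) : R) := by
  have hXD : (X 0 ^ 4 : MvPolynomial (Fin 3) R) * (H (q2 + q3) - H q2 - H q3)
      = SP (bc q2) (bc q3) := by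
    rw [mul_sub, mul_sub, hH _ (h2.add h3), hH _ h2, hH _ h3]
    exact SG_polar q2 q3
  rw [pairQ_homog _ h1]
  refine Finset.sum_congr rfl fun m hm => ?_
  have hcoeff : coeff (toF3 m) (H (q2 + q3) - H q2 - H q3)
      = coeff (toF3 (m.1 + 4, m.2.1, m.2.2)) (SP (bc q2) (bc q3)) := by
    rw [← hXD, toF3_shift, X_pow_eq_monomial, coeff_monomial_mul, one_mul]
  rw [hcoeff, coeff_SP_bc h2 h3, Finset.mul_sum]
  refine Finset.sum_congr rfl fun t _ => ?_
  rw [Finset.mul_sum]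
  exact Finset.sum_congr rfl fun s _ => by ring

lemma key12Z : ∀ m ∈ F15, ∀ t ∈ F15, ∀ s ∈ F15,
    (cW m : ℤ) * kZ t s m = (cW t : ℤ) * kZ m s t := by decide

lemma swap12 {H : MvPolynomial (Fin 3) R → MvPolynomial (Fin 3) R}
    (hH : ∀ p : MvPolynomial (Fin 3) R, p.IsHomogeneous 4 → X 0 ^ 4 * H p = SG p)
    {q1 q2 q3 : MvPolynomial (Fin 3) R} (h1 : q1.IsHomogeneous 4)
    (h2 : q2.IsHomogeneous 4) (h3 : q3.IsHomogeneous 4) :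
    pairQ q1 (H (q2 + q3) - H q2 - H q3) = pairQ q2 (H (q1 + q3) - H q1 - H q3) := by
  rw [master hH h1 h2 h3, master hH h2 h1 h3]
  conv_rhs => rw [Finset.sum_comm]
  refine Finset.sum_congr rfl fun m hm => Finset.sum_congr rfl fun t ht =>
    Finset.sum_congr rfl fun s hs => ?_
  have hk : ((cW m : ℤ) * kZ t s m : ℤ) = ((cW t : ℤ) * kZ m s t : ℤ) :=
    key12Z m hm t ht s hs
  have hkR : (cW m : R) * ((kZ t s m : ℤ) : R) = (cW t : R) * ((kZ m s t : ℤ) : R) := by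
    have := congrArg (fun z : ℤ => (z : R)) hk
    push_cast at this
    exact this
  calc (cW m : R) * coeff (toF3 m) q1 * coeff (toF3 t) q2 * coeff (toF3 s) q3
        * ((kZ t s m : ℤ) : R)
      = coeff (toF3 m) q1 * coeff (toF3 t) q2 * coeff (toF3 s) q3
        * ((cW m : R) * ((kZ t s m : ℤ) : R)) := by ring
    _ = coeff (toF3 m) q1 * coeff (toF3 t) q2 * coeff (toF3 s) q3
        * ((cW t : R) * ((kZ m s t : ℤ) : R)) := by rw [hkR]
    _ = _ := by ring

lemma swap23 {H : MvPolynomial (Fin 3) R → MvPolynomial (Fin 3) R}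
    (hH : ∀ p : MvPolynomial (Fin 3) R, p.IsHomogeneous 4 → X 0 ^ 4 * H p = SG p)
    {q1 q2 q3 : MvPolynomial (Fin 3) R} (h1 : q1.IsHomogeneous 4)
    (h2 : q2.IsHomogeneous 4) (h3 : q3.IsHomogeneous 4) :
    pairQ q1 (H (q2 + q3) - H q2 - H q3) = pairQ q1 (H (q3 + q2) - H q3 - H q2) := by
  rw [master hH h1 h2 h3, master hH h1 h3 h2]
  refine Finset.sum_congr rfl fun m hm => ?_
  rw [Finset.sum_comm]
  refine Finset.sum_congr rfl fun t ht => Finset.sum_congr rfl fun s hs => ?_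
  rw [kZ_comm]
  ring

end Stmt2Aux

/-- Let `H` be the harmonic-quartic operation on ternary quartic forms,
characterized by `u⁴ · H(q) = S(q(-vy-wz, uy, uz))`.  The trilinear form
`t(q₁,q₂,q₃) = ⟨q₁, H(q₂+q₃) − H(q₂) − H(q₃)⟩` is symmetric in its three arguments. -/
theorem stmt2 {R : Type*} [CommRing R]
    (H : MvPolynomial (Fin 3) R → MvPolynomial (Fin 3) R)
    (hH : ∀ p : MvPolynomial (Fin 3) R, p.IsHomogeneous 4 → X 0 ^ 4 * H p = SG p)
    (Q : Fin 3 → MvPolynomial (Fin 3) R) (hQ : ∀ i, (Q i).IsHomogeneous 4)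
    (σ : Equiv.Perm (Fin 3)) :
    pairQ (Q 0) (H (Q 1 + Q 2) - H (Q 1) - H (Q 2)) =
      pairQ (Q (σ 0)) (H (Q (σ 1) + Q (σ 2)) - H (Q (σ 1)) - H (Q (σ 2))) := by
  let f : Fin 3 → Fin 3 → Fin 3 → R := fun a b c =>
    pairQ (Q a) (H (Q b + Q c) - H (Q b) - H (Q c))
  have s12 : ∀ a b c : Fin 3, f a b c = f b a c := fun a b c =>
    Stmt2Aux.swap12 hH (hQ a) (hQ b) (hQ c)
  have s23 : ∀ a b c : Fin 3, f a b c = f a c b := fun a b c =>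
    Stmt2Aux.swap23 hH (hQ a) (hQ b) (hQ c)
  show f 0 1 2 = f (σ 0) (σ 1) (σ 2)
  have h01 : σ 0 ≠ σ 1 := fun h => absurd (σ.injective h) (by decide)
  have h02 : σ 0 ≠ σ 2 := fun h => absurd (σ.injective h) (by decide)
  have h12 : σ 1 ≠ σ 2 := fun h => absurd (σ.injective h) (by decide)
  have hv : ∀ x : Fin 3, x = 0 ∨ x = 1 ∨ x = 2 := by decide
  have e213 : f 0 1 2 = f 1 0 2 := s12 0 1 2
  have e132 : f 0 1 2 = f 0 2 1 := s23 0 1 2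
  have e231 : f 0 1 2 = f 1 2 0 := by rw [e213]; exact s23 1 0 2
  have e312 : f 0 1 2 = f 2 0 1 := by rw [e132]; exact s12 0 2 1
  have e321 : f 0 1 2 = f 2 1 0 := by rw [e312]; exact s23 2 0 1
  rcases hv (σ 0) with h0|h0|h0 <;> rcases hv (σ 1) with h1|h1|h1 <;>
    rcases hv (σ 2) with h2|h2|h2 <;>
    rw [h0, h1, h2] <;>
    first
      | rfl
      | exact e213 | exact e132 | exact e231 | exact e312 | exact e321
      | exact absurd (h0.trans h1.symm) h01
      | exact absurd (h0.trans h2.symm) h02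
      | exact absurd (h1.trans h2.symm) h12
end
end

section
/- Let R be a commutative ring, let q be a ternary quartic form over R, and let 𝔤 = Σ_{ξ,η ∈ {x,y,z}} c_{ξη} ξ∂_η be a derivation of R[x,y,z] with c_{xx} + c_{yy} + c_{zz} = 0 (an element of 𝔰𝔩₃(R) acting as a differential operator on polynomials). Then ⟨𝔤q, H(q)⟩ = 0. -/
open MvPolynomial

noncomputable section

section StmtInfra
variable {R : Type*} [CommRing R]

def d3 (i j k : ℕ) : Fin 3 →₀ ℕ := Finsupp.single 0 i + Finsupp.single 1 j + Finsupp.single 2 k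
def d2 (p q : ℕ) : Fin 2 →₀ ℕ := Finsupp.single 0 p + Finsupp.single 1 q

lemma d3_apply0 (i j k : ℕ) : d3 i j k 0 = i := by simp [d3, Finsupp.single_apply]
lemma d3_apply1 (i j k : ℕ) : d3 i j k 1 = j := by simp [d3, Finsupp.single_apply]
lemma d3_apply2 (i j k : ℕ) : d3 i j k 2 = k := by simp [d3, Finsupp.single_apply]

lemma d3_eta (m : Fin 3 →₀ ℕ) : m = d3 (m 0) (m 1) (m 2) := by
  ext i; fin_cases i <;> simp [d3, Finsupp.single_apply]

lemma d3_eq_iff (i j k i' j' k' : ℕ) : d3 i j k = d3 i' j' k' ↔ i = i' ∧ j = j' ∧ k = k' := by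
  constructor
  · intro h
    refine ⟨?_, ?_, ?_⟩
    · have := DFunLike.congr_fun h 0; simpa [d3_apply0] using this
    · have := DFunLike.congr_fun h 1; simpa [d3_apply1] using this
    · have := DFunLike.congr_fun h 2; simpa [d3_apply2] using this
  · rintro ⟨rfl, rfl, rfl⟩; rfl

lemma d2_eq_iff (p q p' q' : ℕ) : d2 p q = d2 p' q' ↔ p = p' ∧ q = q' := by
  constructor
  · intro h
    constructor
    · have := DFunLike.congr_fun h 0; simpa [d2, Finsupp.single_apply] using this
    · have := DFunLike.congr_fun h 1; simpa [d2, Finsupp.single_apply] using this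
  · rintro ⟨rfl, rfl⟩; rfl

lemma CX3_eq (r : R) (i j k : ℕ) :
    (C r * X 0 ^ i * X 1 ^ j * X 2 ^ k : MvPolynomial (Fin 3) R) = monomial (d3 i j k) r := by
  rw [C_apply, X_pow_eq_monomial, X_pow_eq_monomial, X_pow_eq_monomial,
    monomial_mul, monomial_mul, monomial_mul]
  simp [d3]

lemma coeff_CX3 (r : R) (i j k x y z : ℕ) :
    coeff (d3 x y z) (C r * X 0 ^ i * X 1 ^ j * X 2 ^ k : MvPolynomial (Fin 3) R)
      = if i = x ∧ j = y ∧ k = z then r else 0 := by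
  rw [CX3_eq, coeff_monomial]
  simp only [d3_eq_iff]

lemma CX2_eq (r : R) (p q : ℕ) :
    (C r * X 0 ^ p * X 1 ^ q : MvPolynomial (Fin 2) R) = monomial (d2 p q) r := by
  rw [C_apply, X_pow_eq_monomial, X_pow_eq_monomial, monomial_mul, monomial_mul]
  simp [d2]

lemma coeff_CX2 (r : R) (p q x y : ℕ) :
    coeff (d2 x y) (C r * X 0 ^ p * X 1 ^ q : MvPolynomial (Fin 2) R)
      = if p = x ∧ q = y then r else 0 := by
  rw [CX2_eq, coeff_monomial]
  simp only [d2_eq_iff]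

lemma d3_shift (i j k : ℕ) : d3 (4 + i) j k = Finsupp.single 0 4 + d3 i j k := by
  simp only [d3, Finsupp.single_add]; abel

lemma degree_eq_sum3 (m : Fin 3 →₀ ℕ) : m.degree = m 0 + m 1 + m 2 := by
  rw [Finsupp.degree_apply]
  rw [show (m.support.sum fun i => m i) = ∑ i : Fin 3, m i from
    Finset.sum_subset (Finset.subset_univ _) (fun i _ hi => Finsupp.notMem_support_iff.mp hi)]
  rw [Fin.sum_univ_three]

def S4 : Finset (Fin 3 →₀ ℕ) :=
  {d3 4 0 0, d3 3 1 0, d3 3 0 1, d3 2 2 0, d3 2 1 1, d3 2 0 2, d3 1 3 0, d3 1 2 1,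
   d3 1 1 2, d3 1 0 3, d3 0 4 0, d3 0 3 1, d3 0 2 2, d3 0 1 3, d3 0 0 4}

lemma mem_S4 (m : Fin 3 →₀ ℕ) (hm : m 0 + m 1 + m 2 = 4) : m ∈ S4 := by
  rw [d3_eta m]
  set a := m 0 with ha; set b := m 1 with hb; set c := m 2 with hc
  clear_value a b c
  have h1 : a ≤ 4 := by omega
  have h2 : b ≤ 4 := by omega
  have h3 : c ≤ 4 := by omega
  interval_cases a <;> interval_cases b <;> interval_cases c <;>
    first
    | (exfalso; omega)
    | (simp only [S4, Finset.mem_insert, Finset.mem_singleton, d3_eq_iff]; norm_num)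

theorem qexpM (q : MvPolynomial (Fin 3) R) (hq : q.IsHomogeneous 4) :
    q = ∑ m ∈ S4, monomial m (coeff m q) := by
  have hsub : q.support ⊆ S4 := by
    intro m hm
    apply mem_S4
    rw [← degree_eq_sum3]
    by_contra hne
    exact (mem_support_iff.mp hm) (hq.coeff_eq_zero hne)
  conv_lhs => rw [← support_sum_monomial_coeff q]
  exact Finset.sum_subset hsub (fun m _ hm => by
    rw [notMem_support_iff.mp hm, monomial_zero])

set_option maxHeartbeats 1000000 in
theorem qexp (q : MvPolynomial (Fin 3) R) (hq : q.IsHomogeneous 4) :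
    q = C (coeff (d3 4 0 0) q) * X 0 ^ 4 * X 1 ^ 0 * X 2 ^ 0 +
      C (coeff (d3 3 1 0) q) * X 0 ^ 3 * X 1 ^ 1 * X 2 ^ 0 +
      C (coeff (d3 3 0 1) q) * X 0 ^ 3 * X 1 ^ 0 * X 2 ^ 1 +
      C (coeff (d3 2 2 0) q) * X 0 ^ 2 * X 1 ^ 2 * X 2 ^ 0 +
      C (coeff (d3 2 1 1) q) * X 0 ^ 2 * X 1 ^ 1 * X 2 ^ 1 +
      C (coeff (d3 2 0 2) q) * X 0 ^ 2 * X 1 ^ 0 * X 2 ^ 2 +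
      C (coeff (d3 1 3 0) q) * X 0 ^ 1 * X 1 ^ 3 * X 2 ^ 0 +
      C (coeff (d3 1 2 1) q) * X 0 ^ 1 * X 1 ^ 2 * X 2 ^ 1 +
      C (coeff (d3 1 1 2) q) * X 0 ^ 1 * X 1 ^ 1 * X 2 ^ 2 +
      C (coeff (d3 1 0 3) q) * X 0 ^ 1 * X 1 ^ 0 * X 2 ^ 3 +
      C (coeff (d3 0 4 0) q) * X 0 ^ 0 * X 1 ^ 4 * X 2 ^ 0 +
      C (coeff (d3 0 3 1) q) * X 0 ^ 0 * X 1 ^ 3 * X 2 ^ 1 +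
      C (coeff (d3 0 2 2) q) * X 0 ^ 0 * X 1 ^ 2 * X 2 ^ 2 +
      C (coeff (d3 0 1 3) q) * X 0 ^ 0 * X 1 ^ 1 * X 2 ^ 3 +
      C (coeff (d3 0 0 4) q) * X 0 ^ 0 * X 1 ^ 0 * X 2 ^ 4 := by
  rw [qexpM q hq]
  simp only [CX3_eq]
  rw [S4]
  simp [Finset.sum_insert, Finset.mem_insert, Finset.mem_singleton, d3_eq_iff]
  abel

def wt (m : Fin 3 →₀ ℕ) : ℕ := (m 0).factorial * (m 1).factorial * (m 2).factorial / 2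

end StmtInfra

lemma algebraMap_CC {R : Type*} [CommRing R] (r : R) :
    (algebraMap R (MvPolynomial (Fin 2) (MvPolynomial (Fin 3) R))) r = C (C r) := rfl

section PairQLemmas
variable {R : Type*} [CommRing R]

lemma pairQ_eq_sum (q h : MvPolynomial (Fin 3) R) (S : Finset (Fin 3 →₀ ℕ))
    (hS : q.support ⊆ S) :
    pairQ q h = ∑ m ∈ S, (wt m : R) * coeff m q * coeff m h := by
  rw [pairQ]
  exact Finset.sum_subset hS (fun m _ hm => by
    rw [notMem_support_iff.mp hm]; ring)

lemma pairQ_add (p q h : MvPolynomial (Fin 3) R) :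
    pairQ (p + q) h = pairQ p h + pairQ q h := by
  classical
  set S := p.support ∪ q.support ∪ (p + q).support with hS
  rw [pairQ_eq_sum (p+q) h S (by intro m hm; simp [hS, hm]),
      pairQ_eq_sum p h S (by intro m hm; simp [hS, hm]),
      pairQ_eq_sum q h S (by intro m hm; simp [hS, hm]),
      ← Finset.sum_add_distrib]
  exact Finset.sum_congr rfl (fun m _ => by rw [coeff_add]; ring)

lemma pairQ_monomial (μ : Fin 3 →₀ ℕ) (r : R) (h : MvPolynomial (Fin 3) R) :
    pairQ (monomial μ r) h = (wt μ : R) * r * coeff μ h := by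
  classical
  rw [pairQ_eq_sum _ h {μ} support_monomial_subset, Finset.sum_singleton,
    coeff_monomial, if_pos rfl]

end PairQLemmas

set_option maxHeartbeats 8000000 in
/-- For every traceless `𝔤 = Σ c_{ξη} ξ∂_η ∈ 𝔰𝔩₃(R)` and every ternary
quartic form `q` with harmonic quartic `h` (so `u⁴·h = SG q`), one has `⟨𝔤q, h⟩ = 0`. -/
theorem stmt3 {R : Type*} [CommRing R]
    (q h : MvPolynomial (Fin 3) R) (hq : q.IsHomogeneous 4)
    (hh : X 0 ^ 4 * h = SG q)
    (c : Fin 3 → Fin 3 → R) (htr : c 0 0 + c 1 1 + c 2 2 = 0) :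
    pairQ (lieAct c q) h = 0 := by
  have hgsub : gsub q =
      C ((C (coeff (d3 0 4 0) q) * X 0 ^ 4) + ((-1) * C (coeff (d3 1 3 0) q) * X 0 ^ 3 * X 1 ^ 1) + (C (coeff (d3 2 2 0) q) * X 0 ^ 2 * X 1 ^ 2) + ((-1) * C (coeff (d3 3 1 0) q) * X 0 ^ 1 * X 1 ^ 3) + (C (coeff (d3 4 0 0) q) * X 1 ^ 4)) * X 0 ^ 4 * X 1 ^ 0 +
      C ((C (coeff (d3 0 3 1) q) * X 0 ^ 4) + ((-1) * C (coeff (d3 1 2 1) q) * X 0 ^ 3 * X 1 ^ 1) + ((-1) * C (coeff (d3 1 3 0) q) * X 0 ^ 3 * X 2 ^ 1) + (C (coeff (d3 2 1 1) q) * X 0 ^ 2 * X 1 ^ 2) + (2 * C (coeff (d3 2 2 0) q) * X 0 ^ 2 * X 1 ^ 1 * X 2 ^ 1) + ((-1) * C (coeff (d3 3 0 1) q) * X 0 ^ 1 * X 1 ^ 3) + ((-3) * C (coeff (d3 3 1 0) q) * X 0 ^ 1 * X 1 ^ 2 * X 2 ^ 1) + (4 * C (coeff (d3 4 0 0) q)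 * X 1 ^ 3 * X 2 ^ 1)) * X 0 ^ 3 * X 1 ^ 1 +
      C ((C (coeff (d3 0 2 2) q) * X 0 ^ 4) + ((-1) * C (coeff (d3 1 1 2) q) * X 0 ^ 3 * X 1 ^ 1) + ((-1) * C (coeff (d3 1 2 1) q) * X 0 ^ 3 * X 2 ^ 1) + (C (coeff (d3 2 0 2) q) * X 0 ^ 2 * X 1 ^ 2) + (2 * C (coeff (d3 2 1 1) q) * X 0 ^ 2 * X 1 ^ 1 * X 2 ^ 1) + (C (coeff (d3 2 2 0) q) * X 0 ^ 2 * X 2 ^ 2) + ((-3) * C (coeff (d3 3 0 1) q) * X 0 ^ 1 * X 1 ^ 2 * X 2 ^ 1) + ((-3) * C (coeff (d3 3 1 0) q) * X 0 ^ 1 * X 1 ^ 1 * X 2 ^ 2) + (6 * C (coeff (d3 4 0 0) q) * X 1 ^ 2 * X 2 ^ 2)) * X 0 ^ 2 * X 1 ^ 2 +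
      C ((C (coeff (d3 0 1 3) q) * X 0 ^ 4) + ((-1) * C (coeff (d3 1 0 3) q) * X 0 ^ 3 * X 1 ^ 1) + ((-1) * C (coeff (d3 1 1 2) q) * X 0 ^ 3 * X 2 ^ 1) + (2 * C (coeff (d3 2 0 2) q) * X 0 ^ 2 * X 1 ^ 1 * X 2 ^ 1) + (C (coeff (d3 2 1 1) q) * X 0 ^ 2 * X 2 ^ 2) + ((-3) * C (coeff (d3 3 0 1) q) * X 0 ^ 1 * X 1 ^ 1 * X 2 ^ 2) + ((-1) * C (coeff (d3 3 1 0) q) * X 0 ^ 1 * X 2 ^ 3) + (4 * C (coeff (d3 4 0 0) q) * X 1 ^ 1 * X 2 ^ 3)) * X 0 ^ 1 * X 1 ^ 3 +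
      C ((C (coeff (d3 0 0 4) q) * X 0 ^ 4) + ((-1) * C (coeff (d3 1 0 3) q) * X 0 ^ 3 * X 2 ^ 1) + (C (coeff (d3 2 0 2) q) * X 0 ^ 2 * X 2 ^ 2) + ((-1) * C (coeff (d3 3 0 1) q) * X 0 ^ 1 * X 2 ^ 3) + (C (coeff (d3 4 0 0) q) * X 2 ^ 4)) * X 0 ^ 0 * X 1 ^ 4 := by
    conv_lhs => rw [gsub, qexp q hq]
    simp only [map_add, map_mul, map_pow, map_neg, map_sub, map_ofNat, C_1, aeval_C, aeval_X,
      Matrix.cons_val_zero, Matrix.cons_val_one, Matrix.head_cons, Matrix.cons_val_two,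
      Matrix.tail_cons, algebraMap_CC]
    ring

  have hbin0 : binCoeff (gsub q) 0 = (C (coeff (d3 0 4 0) q) * X 0 ^ 4) + ((-1) * C (coeff (d3 1 3 0) q) * X 0 ^ 3 * X 1 ^ 1) + (C (coeff (d3 2 2 0) q) * X 0 ^ 2 * X 1 ^ 2) + ((-1) * C (coeff (d3 3 1 0) q) * X 0 ^ 1 * X 1 ^ 3) + (C (coeff (d3 4 0 0) q) * X 1 ^ 4) := by
    have : binCoeff (gsub q) 0 = coeff (d2 4 0) (gsub q) := rfl
    rw [this, hgsub]
    simp only [coeff_add, coeff_CX2]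
    norm_num

  have hbin1 : binCoeff (gsub q) 1 = (C (coeff (d3 0 3 1) q) * X 0 ^ 4) + ((-1) * C (coeff (d3 1 2 1) q) * X 0 ^ 3 * X 1 ^ 1) + ((-1) * C (coeff (d3 1 3 0) q) * X 0 ^ 3 * X 2 ^ 1) + (C (coeff (d3 2 1 1) q) * X 0 ^ 2 * X 1 ^ 2) + (2 * C (coeff (d3 2 2 0) q) * X 0 ^ 2 * X 1 ^ 1 * X 2 ^ 1) + ((-1) * C (coeff (d3 3 0 1) q) * X 0 ^ 1 * X 1 ^ 3) + ((-3) * C (coeff (d3 3 1 0) q) * X 0 ^ 1 * X 1 ^ 2 * X 2 ^ 1) + (4 * C (coeff (d3 4 0 0) q) * X 1 ^ 3 * X 2 ^ 1) := by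
    have : binCoeff (gsub q) 1 = coeff (d2 3 1) (gsub q) := rfl
    rw [this, hgsub]
    simp only [coeff_add, coeff_CX2]
    norm_num

  have hbin2 : binCoeff (gsub q) 2 = (C (coeff (d3 0 2 2) q) * X 0 ^ 4) + ((-1) * C (coeff (d3 1 1 2) q) * X 0 ^ 3 * X 1 ^ 1) + ((-1) * C (coeff (d3 1 2 1) q) * X 0 ^ 3 * X 2 ^ 1) + (C (coeff (d3 2 0 2) q) * X 0 ^ 2 * X 1 ^ 2) + (2 * C (coeff (d3 2 1 1) q) * X 0 ^ 2 * X 1 ^ 1 * X 2 ^ 1) + (C (coeff (d3 2 2 0) q) * X 0 ^ 2 * X 2 ^ 2) + ((-3) * C (coeff (d3 3 0 1) q) * X 0 ^ 1 * X 1 ^ 2 * X 2 ^ 1) + ((-3) * C (coeff (d3 3 1 0) q) * X 0 ^ 1 * X 1 ^ 1 * X 2 ^ 2) + (6 * C (coeff (d3 4 0 0) q) * X 1 ^ 2 * X 2 ^ 2) := by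
    have : binCoeff (gsub q) 2 = coeff (d2 2 2) (gsub q) := rfl
    rw [this, hgsub]
    simp only [coeff_add, coeff_CX2]
    norm_num

  have hbin3 : binCoeff (gsub q) 3 = (C (coeff (d3 0 1 3) q) * X 0 ^ 4) + ((-1) * C (coeff (d3 1 0 3) q) * X 0 ^ 3 * X 1 ^ 1) + ((-1) * C (coeff (d3 1 1 2) q) * X 0 ^ 3 * X 2 ^ 1) + (2 * C (coeff (d3 2 0 2) q) * X 0 ^ 2 * X 1 ^ 1 * X 2 ^ 1) + (C (coeff (d3 2 1 1) q) * X 0 ^ 2 * X 2 ^ 2) + ((-3) * C (coeff (d3 3 0 1) q) * X 0 ^ 1 * X 1 ^ 1 * X 2 ^ 2) + ((-1) * C (coeff (d3 3 1 0) q) * X 0 ^ 1 * X 2 ^ 3) + (4 * C (coeff (d3 4 0 0) q) * X 1 ^ 1 * X 2 ^ 3) := by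
    have : binCoeff (gsub q) 3 = coeff (d2 1 3) (gsub q) := rfl
    rw [this, hgsub]
    simp only [coeff_add, coeff_CX2]
    norm_num

  have hbin4 : binCoeff (gsub q) 4 = (C (coeff (d3 0 0 4) q) * X 0 ^ 4) + ((-1) * C (coeff (d3 1 0 3) q) * X 0 ^ 3 * X 2 ^ 1) + (C (coeff (d3 2 0 2) q) * X 0 ^ 2 * X 2 ^ 2) + ((-1) * C (coeff (d3 3 0 1) q) * X 0 ^ 1 * X 2 ^ 3) + (C (coeff (d3 4 0 0) q) * X 2 ^ 4) := by
    have : binCoeff (gsub q) 4 = coeff (d2 0 4) (gsub q) := rfl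
    rw [this, hgsub]
    simp only [coeff_add, coeff_CX2]
    norm_num

  have hSG : SG q =
      C ((coeff (d3 0 2 2) q ^ 2) + ((-3) * coeff (d3 0 1 3) q * coeff (d3 0 3 1) q) + (12 * coeff (d3 0 0 4) q * coeff (d3 0 4 0) q)) * X 0 ^ 8 * X 1 ^ 0 * X 2 ^ 0 +
      C ((3 * coeff (d3 0 3 1) q * coeff (d3 1 0 3) q) + ((-2) * coeff (d3 0 2 2) q * coeff (d3 1 1 2) q) + (3 * coeff (d3 0 1 3) q * coeff (d3 1 2 1) q) + ((-12) * coeff (d3 0 0 4) q * coeff (d3 1 3 0) q)) * X 0 ^ 7 * X 1 ^ 1 * X 2 ^ 0 +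
      C (((-12) * coeff (d3 0 4 0) q * coeff (d3 1 0 3) q) + (3 * coeff (d3 0 3 1) q * coeff (d3 1 1 2) q) + ((-2) * coeff (d3 0 2 2) q * coeff (d3 1 2 1) q) + (3 * coeff (d3 0 1 3) q * coeff (d3 1 3 0) q)) * X 0 ^ 7 * X 1 ^ 0 * X 2 ^ 1 +
      C ((coeff (d3 1 1 2) q ^ 2) + ((-3) * coeff (d3 1 0 3) q * coeff (d3 1 2 1) q) + (2 * coeff (d3 0 2 2) q * coeff (d3 2 0 2) q) + ((-3) * coeff (d3 0 1 3) q * coeff (d3 2 1 1) q) + (12 * coeff (d3 0 0 4) q * coeff (d3 2 2 0) q)) * X 0 ^ 6 * X 1 ^ 2 * X 2 ^ 0 +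
      C ((-1 * coeff (d3 1 1 2) q * coeff (d3 1 2 1) q) + (9 * coeff (d3 1 0 3) q * coeff (d3 1 3 0) q) + ((-6) * coeff (d3 0 3 1) q * coeff (d3 2 0 2) q) + (4 * coeff (d3 0 2 2) q * coeff (d3 2 1 1) q) + ((-6) * coeff (d3 0 1 3) q * coeff (d3 2 2 0) q)) * X 0 ^ 6 * X 1 ^ 1 * X 2 ^ 1 +
      C ((coeff (d3 1 2 1) q ^ 2) + ((-3) * coeff (d3 1 1 2) q * coeff (d3 1 3 0) q) + (12 * coeff (d3 0 4 0) q * coeff (d3 2 0 2) q) + ((-3) * coeff (d3 0 3 1) q * coeff (d3 2 1 1) q) + (2 * coeff (d3 0 2 2) q * coeff (d3 2 2 0) q)) * X 0 ^ 6 * X 1 ^ 0 * X 2 ^ 2 +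
      C (((-2) * coeff (d3 1 1 2) q * coeff (d3 2 0 2) q) + (3 * coeff (d3 1 0 3) q * coeff (d3 2 1 1) q) + (3 * coeff (d3 0 1 3) q * coeff (d3 3 0 1) q) + ((-12) * coeff (d3 0 0 4) q * coeff (d3 3 1 0) q)) * X 0 ^ 5 * X 1 ^ 3 * X 2 ^ 0 +
      C ((4 * coeff (d3 1 2 1) q * coeff (d3 2 0 2) q) + (-1 * coeff (d3 1 1 2) q * coeff (d3 2 1 1) q) + ((-6) * coeff (d3 1 0 3) q * coeff (d3 2 2 0) q) + ((-6) * coeff (d3 0 2 2) q * coeff (d3 3 0 1) q) + (9 * coeff (d3 0 1 3) q * coeff (d3 3 1 0) q)) * X 0 ^ 5 * X 1 ^ 2 * X 2 ^ 1 +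
      C (((-6) * coeff (d3 1 3 0) q * coeff (d3 2 0 2) q) + (-1 * coeff (d3 1 2 1) q * coeff (d3 2 1 1) q) + (4 * coeff (d3 1 1 2) q * coeff (d3 2 2 0) q) + (9 * coeff (d3 0 3 1) q * coeff (d3 3 0 1) q) + ((-6) * coeff (d3 0 2 2) q * coeff (d3 3 1 0) q)) * X 0 ^ 5 * X 1 ^ 1 * X 2 ^ 2 +
      C ((3 * coeff (d3 1 3 0) q * coeff (d3 2 1 1) q) + ((-2) * coeff (d3 1 2 1) q * coeff (d3 2 2 0) q) + ((-12) * coeff (d3 0 4 0) q * coeff (d3 3 0 1) q) + (3 * coeff (d3 0 3 1) q * coeff (d3 3 1 0) q)) * X 0 ^ 5 * X 1 ^ 0 * X 2 ^ 3 +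
      C ((coeff (d3 2 0 2) q ^ 2) + ((-3) * coeff (d3 1 0 3) q * coeff (d3 3 0 1) q) + (12 * coeff (d3 0 0 4) q * coeff (d3 4 0 0) q)) * X 0 ^ 4 * X 1 ^ 4 * X 2 ^ 0 +
      C (((-2) * coeff (d3 2 0 2) q * coeff (d3 2 1 1) q) + (3 * coeff (d3 1 1 2) q * coeff (d3 3 0 1) q) + (3 * coeff (d3 1 0 3) q * coeff (d3 3 1 0) q) + ((-12) * coeff (d3 0 1 3) q * coeff (d3 4 0 0) q)) * X 0 ^ 4 * X 1 ^ 3 * X 2 ^ 1 +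
      C ((coeff (d3 2 1 1) q ^ 2) + (2 * coeff (d3 2 0 2) q * coeff (d3 2 2 0) q) + ((-3) * coeff (d3 1 2 1) q * coeff (d3 3 0 1) q) + ((-3) * coeff (d3 1 1 2) q * coeff (d3 3 1 0) q) + (12 * coeff (d3 0 2 2) q * coeff (d3 4 0 0) q)) * X 0 ^ 4 * X 1 ^ 2 * X 2 ^ 2 +
      C (((-2) * coeff (d3 2 1 1) q * coeff (d3 2 2 0) q) + (3 * coeff (d3 1 3 0) q * coeff (d3 3 0 1) q) + (3 * coeff (d3 1 2 1) q * coeff (d3 3 1 0) q) + ((-12) * coeff (d3 0 3 1) q * coeff (d3 4 0 0) q)) * X 0 ^ 4 * X 1 ^ 1 * X 2 ^ 3 +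
      C ((coeff (d3 2 2 0) q ^ 2) + ((-3) * coeff (d3 1 3 0) q * coeff (d3 3 1 0) q) + (12 * coeff (d3 0 4 0) q * coeff (d3 4 0 0) q)) * X 0 ^ 4 * X 1 ^ 0 * X 2 ^ 4 := by
    simp only [SG, Sinv]
    rw [hbin0, hbin1, hbin2, hbin3, hbin4]
    simp only [map_add, map_sub, map_mul, map_pow, map_neg, map_one, map_ofNat, C_1]
    ring

  have hco400 : coeff (d3 4 0 0) h = (coeff (d3 0 2 2) q ^ 2) + ((-3) * coeff (d3 0 1 3) q * coeff (d3 0 3 1) q) + (12 * coeff (d3 0 0 4) q * coeff (d3 0 4 0) q) := by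
    have e1 : coeff (d3 (4 + 4) 0 0) (SG q) = coeff (d3 4 0 0) h := by
      rw [← hh, d3_shift, X_pow_eq_monomial, coeff_monomial_mul, one_mul]
    rw [← e1, hSG]
    simp only [coeff_add, coeff_CX3]
    norm_num

  have hco310 : coeff (d3 3 1 0) h = (3 * coeff (d3 0 3 1) q * coeff (d3 1 0 3) q) + ((-2) * coeff (d3 0 2 2) q * coeff (d3 1 1 2) q) + (3 * coeff (d3 0 1 3) q * coeff (d3 1 2 1) q) + ((-12) * coeff (d3 0 0 4) q * coeff (d3 1 3 0) q) := by
    have e1 : coeff (d3 (4 + 3) 1 0) (SG q) = coeff (d3 3 1 0) h := by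
      rw [← hh, d3_shift, X_pow_eq_monomial, coeff_monomial_mul, one_mul]
    rw [← e1, hSG]
    simp only [coeff_add, coeff_CX3]
    norm_num

  have hco301 : coeff (d3 3 0 1) h = ((-12) * coeff (d3 0 4 0) q * coeff (d3 1 0 3) q) + (3 * coeff (d3 0 3 1) q * coeff (d3 1 1 2) q) + ((-2) * coeff (d3 0 2 2) q * coeff (d3 1 2 1) q) + (3 * coeff (d3 0 1 3) q * coeff (d3 1 3 0) q) := by
    have e1 : coeff (d3 (4 + 3) 0 1) (SG q) = coeff (d3 3 0 1) h := by
      rw [← hh, d3_shift, X_pow_eq_monomial, coeff_monomial_mul, one_mul]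
    rw [← e1, hSG]
    simp only [coeff_add, coeff_CX3]
    norm_num

  have hco220 : coeff (d3 2 2 0) h = (coeff (d3 1 1 2) q ^ 2) + ((-3) * coeff (d3 1 0 3) q * coeff (d3 1 2 1) q) + (2 * coeff (d3 0 2 2) q * coeff (d3 2 0 2) q) + ((-3) * coeff (d3 0 1 3) q * coeff (d3 2 1 1) q) + (12 * coeff (d3 0 0 4) q * coeff (d3 2 2 0) q) := by
    have e1 : coeff (d3 (4 + 2) 2 0) (SG q) = coeff (d3 2 2 0) h := by
      rw [← hh, d3_shift, X_pow_eq_monomial, coeff_monomial_mul, one_mul]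
    rw [← e1, hSG]
    simp only [coeff_add, coeff_CX3]
    norm_num

  have hco211 : coeff (d3 2 1 1) h = (-1 * coeff (d3 1 1 2) q * coeff (d3 1 2 1) q) + (9 * coeff (d3 1 0 3) q * coeff (d3 1 3 0) q) + ((-6) * coeff (d3 0 3 1) q * coeff (d3 2 0 2) q) + (4 * coeff (d3 0 2 2) q * coeff (d3 2 1 1) q) + ((-6) * coeff (d3 0 1 3) q * coeff (d3 2 2 0) q) := by
    have e1 : coeff (d3 (4 + 2) 1 1) (SG q) = coeff (d3 2 1 1) h := by
      rw [← hh, d3_shift, X_pow_eq_monomial, coeff_monomial_mul, one_mul]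
    rw [← e1, hSG]
    simp only [coeff_add, coeff_CX3]
    norm_num

  have hco202 : coeff (d3 2 0 2) h = (coeff (d3 1 2 1) q ^ 2) + ((-3) * coeff (d3 1 1 2) q * coeff (d3 1 3 0) q) + (12 * coeff (d3 0 4 0) q * coeff (d3 2 0 2) q) + ((-3) * coeff (d3 0 3 1) q * coeff (d3 2 1 1) q) + (2 * coeff (d3 0 2 2) q * coeff (d3 2 2 0) q) := by
    have e1 : coeff (d3 (4 + 2) 0 2) (SG q) = coeff (d3 2 0 2) h := by
      rw [← hh, d3_shift, X_pow_eq_monomial, coeff_monomial_mul, one_mul]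
    rw [← e1, hSG]
    simp only [coeff_add, coeff_CX3]
    norm_num

  have hco130 : coeff (d3 1 3 0) h = ((-2) * coeff (d3 1 1 2) q * coeff (d3 2 0 2) q) + (3 * coeff (d3 1 0 3) q * coeff (d3 2 1 1) q) + (3 * coeff (d3 0 1 3) q * coeff (d3 3 0 1) q) + ((-12) * coeff (d3 0 0 4) q * coeff (d3 3 1 0) q) := by
    have e1 : coeff (d3 (4 + 1) 3 0) (SG q) = coeff (d3 1 3 0) h := by
      rw [← hh, d3_shift, X_pow_eq_monomial, coeff_monomial_mul, one_mul]
    rw [← e1, hSG]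
    simp only [coeff_add, coeff_CX3]
    norm_num

  have hco121 : coeff (d3 1 2 1) h = (4 * coeff (d3 1 2 1) q * coeff (d3 2 0 2) q) + (-1 * coeff (d3 1 1 2) q * coeff (d3 2 1 1) q) + ((-6) * coeff (d3 1 0 3) q * coeff (d3 2 2 0) q) + ((-6) * coeff (d3 0 2 2) q * coeff (d3 3 0 1) q) + (9 * coeff (d3 0 1 3) q * coeff (d3 3 1 0) q) := by
    have e1 : coeff (d3 (4 + 1) 2 1) (SG q) = coeff (d3 1 2 1) h := by
      rw [← hh, d3_shift, X_pow_eq_monomial, coeff_monomial_mul, one_mul]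
    rw [← e1, hSG]
    simp only [coeff_add, coeff_CX3]
    norm_num

  have hco112 : coeff (d3 1 1 2) h = ((-6) * coeff (d3 1 3 0) q * coeff (d3 2 0 2) q) + (-1 * coeff (d3 1 2 1) q * coeff (d3 2 1 1) q) + (4 * coeff (d3 1 1 2) q * coeff (d3 2 2 0) q) + (9 * coeff (d3 0 3 1) q * coeff (d3 3 0 1) q) + ((-6) * coeff (d3 0 2 2) q * coeff (d3 3 1 0) q) := by
    have e1 : coeff (d3 (4 + 1) 1 2) (SG q) = coeff (d3 1 1 2) h := by
      rw [← hh, d3_shift, X_pow_eq_monomial, coeff_monomial_mul, one_mul]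
    rw [← e1, hSG]
    simp only [coeff_add, coeff_CX3]
    norm_num

  have hco103 : coeff (d3 1 0 3) h = (3 * coeff (d3 1 3 0) q * coeff (d3 2 1 1) q) + ((-2) * coeff (d3 1 2 1) q * coeff (d3 2 2 0) q) + ((-12) * coeff (d3 0 4 0) q * coeff (d3 3 0 1) q) + (3 * coeff (d3 0 3 1) q * coeff (d3 3 1 0) q) := by
    have e1 : coeff (d3 (4 + 1) 0 3) (SG q) = coeff (d3 1 0 3) h := by
      rw [← hh, d3_shift, X_pow_eq_monomial, coeff_monomial_mul, one_mul]
    rw [← e1, hSG]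
    simp only [coeff_add, coeff_CX3]
    norm_num

  have hco040 : coeff (d3 0 4 0) h = (coeff (d3 2 0 2) q ^ 2) + ((-3) * coeff (d3 1 0 3) q * coeff (d3 3 0 1) q) + (12 * coeff (d3 0 0 4) q * coeff (d3 4 0 0) q) := by
    have e1 : coeff (d3 (4 + 0) 4 0) (SG q) = coeff (d3 0 4 0) h := by
      rw [← hh, d3_shift, X_pow_eq_monomial, coeff_monomial_mul, one_mul]
    rw [← e1, hSG]
    simp only [coeff_add, coeff_CX3]
    norm_num

  have hco031 : coeff (d3 0 3 1) h = ((-2) * coeff (d3 2 0 2) q * coeff (d3 2 1 1) q) + (3 * coeff (d3 1 1 2) q * coeff (d3 3 0 1) q) + (3 * coeff (d3 1 0 3) q * coeff (d3 3 1 0) q) + ((-12) * coeff (d3 0 1 3) q * coeff (d3 4 0 0) q) := by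
    have e1 : coeff (d3 (4 + 0) 3 1) (SG q) = coeff (d3 0 3 1) h := by
      rw [← hh, d3_shift, X_pow_eq_monomial, coeff_monomial_mul, one_mul]
    rw [← e1, hSG]
    simp only [coeff_add, coeff_CX3]
    norm_num

  have hco022 : coeff (d3 0 2 2) h = (coeff (d3 2 1 1) q ^ 2) + (2 * coeff (d3 2 0 2) q * coeff (d3 2 2 0) q) + ((-3) * coeff (d3 1 2 1) q * coeff (d3 3 0 1) q) + ((-3) * coeff (d3 1 1 2) q * coeff (d3 3 1 0) q) + (12 * coeff (d3 0 2 2) q * coeff (d3 4 0 0) q) := by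
    have e1 : coeff (d3 (4 + 0) 2 2) (SG q) = coeff (d3 0 2 2) h := by
      rw [← hh, d3_shift, X_pow_eq_monomial, coeff_monomial_mul, one_mul]
    rw [← e1, hSG]
    simp only [coeff_add, coeff_CX3]
    norm_num

  have hco013 : coeff (d3 0 1 3) h = ((-2) * coeff (d3 2 1 1) q * coeff (d3 2 2 0) q) + (3 * coeff (d3 1 3 0) q * coeff (d3 3 0 1) q) + (3 * coeff (d3 1 2 1) q * coeff (d3 3 1 0) q) + ((-12) * coeff (d3 0 3 1) q * coeff (d3 4 0 0) q) := by
    have e1 : coeff (d3 (4 + 0) 1 3) (SG q) = coeff (d3 0 1 3) h := by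
      rw [← hh, d3_shift, X_pow_eq_monomial, coeff_monomial_mul, one_mul]
    rw [← e1, hSG]
    simp only [coeff_add, coeff_CX3]
    norm_num

  have hco004 : coeff (d3 0 0 4) h = (coeff (d3 2 2 0) q ^ 2) + ((-3) * coeff (d3 1 3 0) q * coeff (d3 3 1 0) q) + (12 * coeff (d3 0 4 0) q * coeff (d3 4 0 0) q) := by
    have e1 : coeff (d3 (4 + 0) 0 4) (SG q) = coeff (d3 0 0 4) h := by
      rw [← hh, d3_shift, X_pow_eq_monomial, coeff_monomial_mul, one_mul]
    rw [← e1, hSG]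
    simp only [coeff_add, coeff_CX3]
    norm_num

  have hlie : lieAct c q =
      monomial (d3 4 0 0) ((coeff (d3 3 0 1) q * c 0 2) + (coeff (d3 3 1 0) q * c 0 1) + (4 * coeff (d3 4 0 0) q * c 0 0)) +
      monomial (d3 3 1 0) ((coeff (d3 2 1 1) q * c 0 2) + (2 * coeff (d3 2 2 0) q * c 0 1) + (coeff (d3 3 0 1) q * c 1 2) + (coeff (d3 3 1 0) q * c 1 1) + (3 * coeff (d3 3 1 0) q * c 0 0) + (4 * coeff (d3 4 0 0) q * c 1 0)) +
      monomial (d3 3 0 1) ((2 * coeff (d3 2 0 2) q * c 0 2) + (coeff (d3 2 1 1) q * c 0 1) + (coeff (d3 3 0 1) q * c 2 2) + (3 * coeff (d3 3 0 1) q * c 0 0) + (coeff (d3 3 1 0) q * c 2 1) + (4 * coeff (d3 4 0 0) q * c 2 0)) +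
      monomial (d3 2 2 0) ((coeff (d3 1 2 1) q * c 0 2) + (3 * coeff (d3 1 3 0) q * c 0 1) + (coeff (d3 2 1 1) q * c 1 2) + (2 * coeff (d3 2 2 0) q * c 1 1) + (2 * coeff (d3 2 2 0) q * c 0 0) + (3 * coeff (d3 3 1 0) q * c 1 0)) +
      monomial (d3 2 1 1) ((2 * coeff (d3 1 1 2) q * c 0 2) + (2 * coeff (d3 1 2 1) q * c 0 1) + (2 * coeff (d3 2 0 2) q * c 1 2) + (coeff (d3 2 1 1) q * c 2 2) + (coeff (d3 2 1 1) q * c 1 1) + (2 * coeff (d3 2 1 1) q * c 0 0) + (2 * coeff (d3 2 2 0) q * c 2 1) + (3 * coeff (d3 3 0 1) q * c 1 0) + (3 * coeff (d3 3 1 0) q * c 2 0)) +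
      monomial (d3 2 0 2) ((3 * coeff (d3 1 0 3) q * c 0 2) + (coeff (d3 1 1 2) q * c 0 1) + (2 * coeff (d3 2 0 2) q * c 2 2) + (2 * coeff (d3 2 0 2) q * c 0 0) + (coeff (d3 2 1 1) q * c 2 1) + (3 * coeff (d3 3 0 1) q * c 2 0)) +
      monomial (d3 1 3 0) ((coeff (d3 0 3 1) q * c 0 2) + (4 * coeff (d3 0 4 0) q * c 0 1) + (coeff (d3 1 2 1) q * c 1 2) + (3 * coeff (d3 1 3 0) q * c 1 1) + (coeff (d3 1 3 0) q * c 0 0) + (2 * coeff (d3 2 2 0) q * c 1 0)) +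
      monomial (d3 1 2 1) ((2 * coeff (d3 0 2 2) q * c 0 2) + (3 * coeff (d3 0 3 1) q * c 0 1) + (2 * coeff (d3 1 1 2) q * c 1 2) + (coeff (d3 1 2 1) q * c 2 2) + (2 * coeff (d3 1 2 1) q * c 1 1) + (coeff (d3 1 2 1) q * c 0 0) + (3 * coeff (d3 1 3 0) q * c 2 1) + (2 * coeff (d3 2 1 1) q * c 1 0) + (2 * coeff (d3 2 2 0) q * c 2 0)) +
      monomial (d3 1 1 2) ((3 * coeff (d3 0 1 3) q * c 0 2) + (2 * coeff (d3 0 2 2) q * c 0 1) + (3 * coeff (d3 1 0 3) q * c 1 2) + (2 * coeff (d3 1 1 2) q * c 2 2) + (coeff (d3 1 1 2) q * c 1 1) + (coeff (d3 1 1 2) q * c 0 0) + (2 * coeff (d3 1 2 1) q * c 2 1) + (2 * coeff (d3 2 0 2) q * c 1 0) + (2 * coeff (d3 2 1 1) q * c 2 0)) +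
      monomial (d3 1 0 3) ((4 * coeff (d3 0 0 4) q * c 0 2) + (coeff (d3 0 1 3) q * c 0 1) + (3 * coeff (d3 1 0 3) q * c 2 2) + (coeff (d3 1 0 3) q * c 0 0) + (coeff (d3 1 1 2) q * c 2 1) + (2 * coeff (d3 2 0 2) q * c 2 0)) +
      monomial (d3 0 4 0) ((coeff (d3 0 3 1) q * c 1 2) + (4 * coeff (d3 0 4 0) q * c 1 1) + (coeff (d3 1 3 0) q * c 1 0)) +
      monomial (d3 0 3 1) ((2 * coeff (d3 0 2 2) q * c 1 2) + (coeff (d3 0 3 1) q * c 2 2) + (3 * coeff (d3 0 3 1) q * c 1 1) + (4 * coeff (d3 0 4 0) q * c 2 1) + (coeff (d3 1 2 1) q * c 1 0) + (coeff (d3 1 3 0) q * c 2 0)) +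
      monomial (d3 0 2 2) ((3 * coeff (d3 0 1 3) q * c 1 2) + (2 * coeff (d3 0 2 2) q * c 2 2) + (2 * coeff (d3 0 2 2) q * c 1 1) + (3 * coeff (d3 0 3 1) q * c 2 1) + (coeff (d3 1 1 2) q * c 1 0) + (coeff (d3 1 2 1) q * c 2 0)) +
      monomial (d3 0 1 3) ((4 * coeff (d3 0 0 4) q * c 1 2) + (3 * coeff (d3 0 1 3) q * c 2 2) + (coeff (d3 0 1 3) q * c 1 1) + (2 * coeff (d3 0 2 2) q * c 2 1) + (coeff (d3 1 0 3) q * c 1 0) + (coeff (d3 1 1 2) q * c 2 0)) +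
      monomial (d3 0 0 4) ((4 * coeff (d3 0 0 4) q * c 2 2) + (coeff (d3 0 1 3) q * c 2 1) + (coeff (d3 1 0 3) q * c 2 0)) := by
    conv_lhs => rw [qexp q hq]
    rw [lieAct]
    simp only [Fin.sum_univ_three]
    simp [pderiv_mul, pderiv_pow, pderiv_X_self, pderiv_X_of_ne, ← CX3_eq,
      map_add, map_mul, map_ofNat, map_neg]
    try ring
  have hw400 : wt (d3 4 0 0) = 12 := by simp [wt, d3_apply0, d3_apply1, d3_apply2, Nat.factorial]
  have hw310 : wt (d3 3 1 0) = 3 := by simp [wt, d3_apply0, d3_apply1, d3_apply2, Nat.factorial]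
  have hw301 : wt (d3 3 0 1) = 3 := by simp [wt, d3_apply0, d3_apply1, d3_apply2, Nat.factorial]
  have hw220 : wt (d3 2 2 0) = 2 := by simp [wt, d3_apply0, d3_apply1, d3_apply2, Nat.factorial]
  have hw211 : wt (d3 2 1 1) = 1 := by simp [wt, d3_apply0, d3_apply1, d3_apply2, Nat.factorial]
  have hw202 : wt (d3 2 0 2) = 2 := by simp [wt, d3_apply0, d3_apply1, d3_apply2, Nat.factorial]
  have hw130 : wt (d3 1 3 0) = 3 := by simp [wt, d3_apply0, d3_apply1, d3_apply2, Nat.factorial]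
  have hw121 : wt (d3 1 2 1) = 1 := by simp [wt, d3_apply0, d3_apply1, d3_apply2, Nat.factorial]
  have hw112 : wt (d3 1 1 2) = 1 := by simp [wt, d3_apply0, d3_apply1, d3_apply2, Nat.factorial]
  have hw103 : wt (d3 1 0 3) = 3 := by simp [wt, d3_apply0, d3_apply1, d3_apply2, Nat.factorial]
  have hw040 : wt (d3 0 4 0) = 12 := by simp [wt, d3_apply0, d3_apply1, d3_apply2, Nat.factorial]
  have hw031 : wt (d3 0 3 1) = 3 := by simp [wt, d3_apply0, d3_apply1, d3_apply2, Nat.factorial]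
  have hw022 : wt (d3 0 2 2) = 2 := by simp [wt, d3_apply0, d3_apply1, d3_apply2, Nat.factorial]
  have hw013 : wt (d3 0 1 3) = 3 := by simp [wt, d3_apply0, d3_apply1, d3_apply2, Nat.factorial]
  have hw004 : wt (d3 0 0 4) = 12 := by simp [wt, d3_apply0, d3_apply1, d3_apply2, Nat.factorial]

  rw [hlie]
  simp only [pairQ_add, pairQ_monomial]
  rw [hw400, hw310, hw301, hw220, hw211, hw202, hw130, hw121, hw112, hw103, hw040, hw031, hw022, hw013, hw004]
  rw [hco400, hco310, hco301, hco220, hco211, hco202, hco130, hco121, hco112, hco103, hco040, hco031, hco022, hco013, hco004]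
  push_cast
  linear_combination ((8 * coeff (d3 1 2 1) q ^ 2 * coeff (d3 2 0 2) q) + ((-24) * coeff (d3 1 1 2) q * coeff (d3 1 3 0) q * coeff (d3 2 0 2) q) + (48 * coeff (d3 0 4 0) q * coeff (d3 2 0 2) q ^ 2) + ((-4) * coeff (d3 1 1 2) q * coeff (d3 1 2 1) q * coeff (d3 2 1 1) q) + (36 * coeff (d3 1 0 3) q * coeff (d3 1 3 0) q * coeff (d3 2 1 1) q) + ((-24) * coeff (d3 0 3 1) q * coeff (d3 2 0 2) q * coeff (d3 2 1 1) q) + (8 * coeff (d3 0 2 2) q * coeff (d3 2 1 1) q ^ 2) + (8 * coeff (d3 1 1 2) q ^ 2 * coeff (d3 2 2 0) q) + ((-24) * coeff (d3 1 0 3) q * coeff (d3 1 2 1) q * coeff (d3 2 2 0) q) + (16 * coeff (d3 0 2 2) q * coeff (d3 2 0 2) q * coeff (d3 2 2 0) q) + ((-24) * coeff (d3 0 1 3) q * coeff (d3 2 1 1) q * coeff (d3 2 2 0) q) + (48 * coeff (d3 0 0 4) q * coeff (d3 2 2 0) q ^ 2) + ((-144) * coeff (d3 0 4 0) q * coeff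 (d3 1 0 3) q * coeff (d3 3 0 1) q) + (36 * coeff (d3 0 3 1) q * coeff (d3 1 1 2) q * coeff (d3 3 0 1) q) + ((-24) * coeff (d3 0 2 2) q * coeff (d3 1 2 1) q * coeff (d3 3 0 1) q) + (36 * coeff (d3 0 1 3) q * coeff (d3 1 3 0) q * coeff (d3 3 0 1) q) + (36 * coeff (d3 0 3 1) q * coeff (d3 1 0 3) q * coeff (d3 3 1 0) q) + ((-24) * coeff (d3 0 2 2) q * coeff (d3 1 1 2) q * coeff (d3 3 1 0) q) + (36 * coeff (d3 0 1 3) q * coeff (d3 1 2 1) q * coeff (d3 3 1 0) q) + ((-144) * coeff (d3 0 0 4) q * coeff (d3 1 3 0) q * coeff (d3 3 1 0) q) + (48 * coeff (d3 0 2 2) q ^ 2 * coeff (d3 4 0 0) q) + ((-144) * coeff (d3 0 1 3) q * coeff (d3 0 3 1) q * coeff (d3 4 0 0) q) + (576 * coeff (d3 0 0 4) q * coeff (d3 0 4 0) q * coeff (d3 4 0 0) q)) * htr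
end
end
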